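/- arXiv:2402.07193 — 8 statements merged into one kernel-verified Lean document; each statement's English description precedes it below -/
import Mathlib

section
/- Gradient and covariance transformation under an exponential symmetry: let A ∈ ℝ^{n×n} be symmetric, let Z be a finite dataset, and suppose each per-sample loss ℓ(·, z) : ℝ^n → ℝ is differentiable and satisfies ℓ(exp(λA) θ, z) = ℓ(θ, z) for all λ ∈ ℝ, θ ∈ ℝ^n, z ∈ Z. Then for every λ and θ: (i) ∇ℓ(exp(λA) θ, z) = exp(−λA) ∇ℓ(θ, z) for each z; (ii) the gradient covariance satisfies Σ(exp(λA) θ) = exp(−λA) Σ(θ) exp(−λA); and (iii) Tr[Σ(exp(λA) θ) A] = Tr[exp(−2λA) Σ(θ) A]. -/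
open scoped RealInnerProductSpace

/-- The action of an `n × n` matrix on `EuclideanSpace ℝ (Fin n)`. -/
noncomputable def matAct {n : ℕ} (M : Matrix (Fin n) (Fin n) ℝ)
    (θ : EuclideanSpace ℝ (Fin n)) : EuclideanSpace ℝ (Fin n) :=
  (EuclideanSpace.equiv (Fin n) ℝ).symm (M.mulVec (EuclideanSpace.equiv (Fin n) ℝ θ))

noncomputable def matCLM {n : ℕ} (M : Matrix (Fin n) (Fin n) ℝ) :
    EuclideanSpace ℝ (Fin n) →L[ℝ] EuclideanSpace ℝ (Fin n) :=
  LinearMap.toContinuousLinearMap (Matrix.toEuclideanLin M)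

lemma matCLM_apply {n : ℕ} (M : Matrix (Fin n) (Fin n) ℝ) (θ : EuclideanSpace ℝ (Fin n)) :
    matCLM M θ = matAct M θ := rfl

lemma matAct_apply {n : ℕ} (M : Matrix (Fin n) (Fin n) ℝ) (θ : EuclideanSpace ℝ (Fin n))
    (i : Fin n) : matAct M θ i = ∑ k, M i k * θ k := rfl

lemma matAct_matAct {n : ℕ} (M N : Matrix (Fin n) (Fin n) ℝ) (θ : EuclideanSpace ℝ (Fin n)) :
    matAct M (matAct N θ) = matAct (M * N) θ := by
  ext i
  show (M.mulVec (N.mulVec (EuclideanSpace.equiv (Fin n) ℝ θ))) i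
    = ((M * N).mulVec (EuclideanSpace.equiv (Fin n) ℝ θ)) i
  simp [matAct, Matrix.mulVec_mulVec]

lemma matAct_one {n : ℕ} (θ : EuclideanSpace ℝ (Fin n)) : matAct 1 θ = θ := by
  ext i; simp [matAct]

lemma grad_coord {n : ℕ} (f : EuclideanSpace ℝ (Fin n) → ℝ) (x : EuclideanSpace ℝ (Fin n))
    (i : Fin n) : gradient f x i = fderiv ℝ f x (EuclideanSpace.single i 1) := by
  have h : ⟪gradient f x, EuclideanSpace.single i 1⟫ = fderiv ℝ f x (EuclideanSpace.single i 1) :=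
    InnerProductSpace.toDual_symm_apply
  rw [EuclideanSpace.inner_single_right] at h
  simpa using h

lemma clm_apply_eq_sum {n : ℕ} (φ : EuclideanSpace ℝ (Fin n) →L[ℝ] ℝ)
    (v : EuclideanSpace ℝ (Fin n)) : φ v = ∑ j, v j * φ (EuclideanSpace.single j 1) := by
  have hv : v = ∑ j, v j • EuclideanSpace.single j (1:ℝ) := by
    have := (EuclideanSpace.basisFun (Fin n) ℝ).sum_repr v
    simp only [EuclideanSpace.basisFun_apply, EuclideanSpace.basisFun_repr] at this
    exact this.symm
  conv_lhs => rw [hv]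
  simp [map_sum]

/-- key gradient transformation: if f ∘ matAct M = f then ∇f θ = M.transpose ∇f(Mθ) -/
lemma grad_transform {n : ℕ} (M : Matrix (Fin n) (Fin n) ℝ)
    (f : EuclideanSpace ℝ (Fin n) → ℝ) (hf : Differentiable ℝ f)
    (hfs : ∀ θ, f (matAct M θ) = f θ) (θ : EuclideanSpace ℝ (Fin n)) :
    gradient f θ = matAct M.transpose (gradient f (matAct M θ)) := by
  have hcomp : f = f ∘ (matCLM M) := by
    funext x; simp [matCLM_apply, hfs]
  have hfd : fderiv ℝ f θ = (fderiv ℝ f (matAct M θ)).comp (matCLM M) := by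
    conv_lhs => rw [hcomp]
    rw [fderiv_comp θ (hf _) (matCLM M).differentiableAt]
    simp [matCLM_apply]
  ext i
  rw [grad_coord, hfd]
  simp only [ContinuousLinearMap.comp_apply]
  rw [clm_apply_eq_sum]
  have hMs : ∀ j, (matCLM M (EuclideanSpace.single i 1)) j = M j i := by
    intro j
    simp [matCLM_apply, matAct_apply, EuclideanSpace.single_apply, mul_comm]
  rw [matAct_apply]
  refine Finset.sum_congr rfl fun j _ => ?_
  rw [hMs j, ← grad_coord, Matrix.transpose_apply, mul_comm]

lemma exp_smul_symm {n : ℕ} (A : Matrix (Fin n) (Fin n) ℝ) (hA : A.IsSymm) (t : ℝ) :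
    (NormedSpace.exp (t • A)).transpose = NormedSpace.exp (t • A) := by
  rw [← Matrix.exp_transpose, Matrix.transpose_smul, hA.eq]

lemma exp_smul_inv {n : ℕ} (A : Matrix (Fin n) (Fin n) ℝ) (l : ℝ) :
    NormedSpace.exp ((-l) • A) * NormedSpace.exp (l • A) = 1 := by
  have h := Matrix.exp_add_of_commute ((-l) • A) (l • A)
    (Commute.smul_left (Commute.smul_right (Commute.refl A) l) (-l))
  rw [← h, ← add_smul, neg_add_cancel, zero_smul, NormedSpace.exp_zero]

/-- Part (i) generic form -/
lemma grad_exp_transform {n : ℕ} (A : Matrix (Fin n) (Fin n) ℝ) (hA : A.IsSymm)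
    (f : EuclideanSpace ℝ (Fin n) → ℝ) (hf : Differentiable ℝ f)
    (hfs : ∀ (l : ℝ) θ, f (matAct (NormedSpace.exp (l • A)) θ) = f θ)
    (l : ℝ) (θ : EuclideanSpace ℝ (Fin n)) :
    gradient f (matAct (NormedSpace.exp (l • A)) θ)
      = matAct (NormedSpace.exp ((-l) • A)) (gradient f θ) := by
  have h := grad_transform (NormedSpace.exp (l • A)) f hf (hfs l) θ
  rw [exp_smul_symm A hA] at h
  rw [h, matAct_matAct, exp_smul_inv, matAct_one]

lemma mul_vecMulVec_mul {n : ℕ} (F : Matrix (Fin n) (Fin n) ℝ) (hF : F.transpose = F)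
    (u v : Fin n → ℝ) :
    F * Matrix.vecMulVec u v * F = Matrix.vecMulVec (F.mulVec u) (F.mulVec v) := by
  funext i j
  have hFs : ∀ a b, F a b = F b a := fun a b => by
    conv_lhs => rw [← hF, Matrix.transpose_apply]
  simp only [Matrix.mul_apply, Matrix.vecMulVec_apply, Matrix.mulVec, dotProduct,
    Finset.sum_mul, Finset.mul_sum]
  refine Finset.sum_congr rfl fun k _ => Finset.sum_congr rfl fun m _ => ?_
  rw [hFs k j]
  ring

lemma matAct_fun {n : ℕ} (M : Matrix (Fin n) (Fin n) ℝ) (v : EuclideanSpace ℝ (Fin n)) :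
    (fun k => matAct M v k) = M.mulVec (fun k => v k) := rfl

/-- Gradient and covariance transformation under an exponential symmetry: if every
per-sample loss satisfies `ℓ (exp (λA) θ) z = ℓ θ z` for a symmetric `A`, then
(i) gradients transform as `∇ℓ(exp(λA)θ) = exp(−λA) ∇ℓ(θ)`,
(ii) the gradient covariance satisfies `Σ(exp(λA)θ) = exp(−λA) Σ(θ) exp(−λA)`, and
(iii) `Tr[Σ(exp(λA)θ) A] = Tr[exp(−2λA) Σ(θ) A]`. -/
theorem exponential_symmetry_gradient_covariance {n : ℕ} {Z : Type*} [Fintype Z] [Nonempty Z]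
    (A : Matrix (Fin n) (Fin n) ℝ) (hA : A.IsSymm)
    (ℓ : Z → EuclideanSpace ℝ (Fin n) → ℝ) (hℓ : ∀ z, Differentiable ℝ (ℓ z))
    (hsym : ∀ (l : ℝ) (θ : EuclideanSpace ℝ (Fin n)) (z : Z),
      ℓ z (matAct (NormedSpace.exp (l • A)) θ) = ℓ z θ)
    (L : EuclideanSpace ℝ (Fin n) → ℝ)
    (hL : ∀ θ, L θ = (1 / (Fintype.card Z : ℝ)) * ∑ z : Z, ℓ z θ)
    (Sig : EuclideanSpace ℝ (Fin n) → Matrix (Fin n) (Fin n) ℝ)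
    (hSig : ∀ θ, Sig θ = Matrix.of fun i j =>
      (1 / (Fintype.card Z : ℝ)) * ∑ z : Z, gradient (ℓ z) θ i * gradient (ℓ z) θ j
        - gradient L θ i * gradient L θ j) :
    ∀ (l : ℝ) (θ : EuclideanSpace ℝ (Fin n)),
      (∀ z : Z, gradient (ℓ z) (matAct (NormedSpace.exp (l • A)) θ)
          = matAct (NormedSpace.exp ((-l) • A)) (gradient (ℓ z) θ))
      ∧ Sig (matAct (NormedSpace.exp (l • A)) θ)
          = NormedSpace.exp ((-l) • A) * Sig θ * NormedSpace.exp ((-l) • A)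
      ∧ (Sig (matAct (NormedSpace.exp (l • A)) θ) * A).trace
          = (NormedSpace.exp ((-(2 * l)) • A) * Sig θ * A).trace := by
  intro l θ
  set E := NormedSpace.exp (l • A) with hEdef
  set F := NormedSpace.exp ((-l) • A) with hFdef
  set c : ℝ := 1 / (Fintype.card Z : ℝ) with hcdef
  -- part (i)
  have hgi : ∀ z, gradient (ℓ z) (matAct E θ) = matAct F (gradient (ℓ z) θ) :=
    fun z => grad_exp_transform A hA (ℓ z) (hℓ z) (fun l' x => hsym l' x z) l θ
  -- L differentiable and symmetric
  have hLdef' : L = fun x => c * ∑ z : Z, ℓ z x := funext hL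
  have hLdiff : Differentiable ℝ L := by
    rw [hLdef']
    exact Differentiable.const_mul (Differentiable.fun_sum fun z _ => hℓ z) c
  have hLsym : ∀ (l' : ℝ) (x : EuclideanSpace ℝ (Fin n)),
      L (matAct (NormedSpace.exp (l' • A)) x) = L x := by
    intro l' x
    rw [hL, hL]
    congr 1
    exact Finset.sum_congr rfl fun z _ => hsym l' x z
  have hgL : gradient L (matAct E θ) = matAct F (gradient L θ) :=
    grad_exp_transform A hA L hLdiff hLsym l θ
  have hFt : F.transpose = F := exp_smul_symm A hA (-l)
  -- Sig decomposition
  have hSd : ∀ x, Sig x = c • (∑ z : Z, Matrix.vecMulVec (fun k => gradient (ℓ z) x k)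
      (fun k => gradient (ℓ z) x k))
      - Matrix.vecMulVec (fun k => gradient L x k) (fun k => gradient L x k) := by
    intro x
    rw [hSig x]
    ext i j
    simp [Matrix.vecMulVec_apply, Matrix.sum_apply, Finset.mul_sum]
  -- part (ii)
  have hii : Sig (matAct E θ) = F * Sig θ * F := by
    rw [hSd (matAct E θ), hSd θ]
    simp only [hgi, hgL]
    simp only [matAct_fun]
    simp only [Matrix.mul_sub, Matrix.sub_mul, mul_smul_comm, smul_mul_assoc,
      Finset.mul_sum, Finset.sum_mul, mul_vecMulVec_mul F hFt]
  refine ⟨hgi, hii, ?_⟩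
  -- part (iii)
  rw [hii]
  have hcomm : Commute F A :=
    Commute.exp_left (Commute.smul_left (Commute.refl A) (-l))
  have hFF : NormedSpace.exp ((-(2 * l)) • A) = F * F := by
    have h2 : (-(2 * l)) • A = (-l) • A + (-l) • A := by
      rw [← add_smul]; congr 1; ring
    rw [h2, hFdef]
    exact Matrix.exp_add_of_commute _ _ (Commute.refl _)
  rw [hFF]
  have hAF : A * F = F * A := hcomm.symm.eq
  have hAFF : A * (F * F) = F * (F * A) := by rw [← mul_assoc, hAF, mul_assoc, hAF]
  calc (F * Sig θ * F * A).trace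
      = ((Sig θ * F * A) * F).trace := by
        rw [show F * Sig θ * F * A = F * (Sig θ * F * A) by noncomm_ring,
          Matrix.trace_mul_comm]
    _ = (Sig θ * (F * (A * F))).trace := by congr 1; noncomm_ring
    _ = (Sig θ * (A * (F * F))).trace := by rw [hAF, ← hAFF]
    _ = ((Sig θ * A) * (F * F)).trace := by congr 1; noncomm_ring
    _ = ((F * F) * (Sig θ * A)).trace := Matrix.trace_mul_comm _ _
    _ = (F * F * Sig θ * A).trace := by congr 1; noncomm_ring
end

section
/- Monotonicity along the degenerate direction (part (1) of the fixed point theorem): let A ∈ ℝ^{n×n} be symmetric, Σ₀ ∈ ℝ^{n×n} positive semidefinite, θ ∈ ℝ^n, γ ≥ 0 and σ² ≥ 0. Define C(λ) = θ^⊤ A exp(2λA) θ and G(λ) = −4γ C(λ) + σ² Tr[exp(−2λA) Σ₀ A]. Then λ ↦ C(λ) is monotonically nondecreasing on ℝ and λ ↦ G(λ) is monotonically nonincreasing on ℝ. -/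
open Matrix

section NoetherAux

attribute [local instance] Matrix.linftyOpNormedRing Matrix.linftyOpNormedAlgebra

variable {n : ℕ}

private lemma psd_trace_nonneg {M : Matrix (Fin n) (Fin n) ℝ} (hM : M.PosSemidef) :
    0 ≤ M.trace := by
  exact hM.trace_nonneg

private lemma trace_mul_psd_nonneg {P Q : Matrix (Fin n) (Fin n) ℝ}
    (hP : P.PosSemidef) (hQ : Q.PosSemidef) : 0 ≤ (P * Q).trace := by
  obtain ⟨B, rfl⟩ : ∃ B : Matrix (Fin n) (Fin n) ℝ, P = Bᴴ * B := by
    open scoped MatrixOrder in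
    obtain ⟨B, hB⟩ := CStarAlgebra.nonneg_iff_eq_star_mul_self.mp hP.nonneg
    exact ⟨B, hB⟩
  rw [Matrix.mul_assoc, Matrix.trace_mul_comm]
  exact psd_trace_nonneg (hQ.mul_mul_conjTranspose_same B)

/-- The linear functional `M ↦ θ ⬝ᵥ (A * M) *ᵥ θ`. -/
private def quadLin (A : Matrix (Fin n) (Fin n) ℝ) (θ : Fin n → ℝ) :
    Matrix (Fin n) (Fin n) ℝ →ₗ[ℝ] ℝ where
  toFun M := θ ⬝ᵥ (A * M) *ᵥ θ
  map_add' M N := by simp [Matrix.mul_add, Matrix.add_mulVec, dotProduct_add]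
  map_smul' c M := by
    simp [Matrix.mul_smul, Matrix.smul_mulVec, dotProduct_smul]

/-- The linear functional `M ↦ Tr (M * S0 * A)`. -/
private def traceLin (S0 A : Matrix (Fin n) (Fin n) ℝ) :
    Matrix (Fin n) (Fin n) ℝ →ₗ[ℝ] ℝ where
  toFun M := (M * S0 * A).trace
  map_add' M N := by simp [Matrix.add_mul, Matrix.trace_add]
  map_smul' c M := by simp [Matrix.smul_mul, Matrix.trace_smul]

private lemma hasDerivAt_exp_mul_smul (A : Matrix (Fin n) (Fin n) ℝ) (c l : ℝ) :
    HasDerivAt (fun t : ℝ => NormedSpace.exp ((c * t) • A))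
      (c • (NormedSpace.exp ((c * l) • A) * A)) l := by
  have h1 := hasDerivAt_exp_smul_const (𝕂 := ℝ) A (c * l)
  have h2 : HasDerivAt (fun t : ℝ => c * t) c l := by
    simpa using (hasDerivAt_id l).const_mul c
  exact HasDerivAt.scomp l h1 h2

private lemma hasDerivAt_lin_exp (φ : Matrix (Fin n) (Fin n) ℝ →ₗ[ℝ] ℝ)
    (A : Matrix (Fin n) (Fin n) ℝ) (c l : ℝ) :
    HasDerivAt (fun t : ℝ => φ (NormedSpace.exp ((c * t) • A)))
      (c * φ (NormedSpace.exp ((c * l) • A) * A)) l := by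
  have hφ := (LinearMap.toContinuousLinearMap φ).hasFDerivAt
    (x := NormedSpace.exp ((c * l) • A))
  have := hφ.comp_hasDerivAt l (hasDerivAt_exp_mul_smul A c l)
  change HasDerivAt (fun t : ℝ => φ (NormedSpace.exp ((c * t) • A))) (φ (c • (NormedSpace.exp ((c * l) • A) * A))) l at this
  simpa [_root_.map_smul, smul_eq_mul] using this

private lemma exp_smul_posSemidef {A : Matrix (Fin n) (Fin n) ℝ} (hAH : Aᴴ = A) (s : ℝ) :
    (NormedSpace.exp (s • A)).PosSemidef := by
  have h3 : (NormedSpace.exp ((s / 2) • A))ᴴ = NormedSpace.exp ((s / 2) • A) := by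
    rw [← Matrix.exp_conjTranspose]
    congr 1
    rw [Matrix.conjTranspose_smul, hAH]
    simp
  have h2 := Matrix.exp_add_of_commute ((s / 2) • A) ((s / 2) • A) (Commute.refl _)
  have h1 : (s / 2) • A + (s / 2) • A = s • A := by
    rw [← add_smul]; norm_num
  have key : NormedSpace.exp (s • A)
      = (NormedSpace.exp ((s / 2) • A))ᴴ * NormedSpace.exp ((s / 2) • A) := by
    rw [h3, ← h2, h1]
  rw [key]
  exact Matrix.posSemidef_conjTranspose_mul_self _

end NoetherAux

/-- Monotonicity along the degenerate direction (part (1) of the fixed point theorem):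
for symmetric `A`, positive semidefinite `S0`, `γ ≥ 0`, `σ² ≥ 0`, the Noether charge
`C(λ) = θᵀ A exp(2λA) θ` is nondecreasing in `λ` and the drift
`G(λ) = −4γ C(λ) + σ² Tr[exp(−2λA) S0 A]` is nonincreasing in `λ`. -/
theorem noether_charge_monotone_drift_antitone {n : ℕ}
    (A S0 : Matrix (Fin n) (Fin n) ℝ) (hA : A.IsSymm) (hS0 : S0.PosSemidef)
    (θ : Fin n → ℝ) (γ σ2 : ℝ) (hγ : 0 ≤ γ) (hσ2 : 0 ≤ σ2)
    (C G : ℝ → ℝ)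
    (hC : ∀ l : ℝ, C l = θ ⬝ᵥ (A * NormedSpace.exp ((2 * l) • A)).mulVec θ)
    (hG : ∀ l : ℝ, G l = -4 * γ * C l
        + σ2 * (NormedSpace.exp ((-(2 * l)) • A) * S0 * A).trace) :
    Monotone C ∧ Antitone G := by
  have hAH : Aᴴ = A := by
    ext i j
    simp only [Matrix.conjTranspose_apply, star_trivial]
    exact congrFun (congrFun hA i) j
  -- C as composition with a linear functional
  have hCdef : C = fun t : ℝ => quadLin A θ (NormedSpace.exp ((2 * t) • A)) := by
    funext t
    rw [hC t]; rfl
  have hCderiv : ∀ l : ℝ, HasDerivAt C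
      (2 * quadLin A θ (NormedSpace.exp ((2 * l) • A) * A)) l := by
    intro l
    rw [hCdef]
    exact hasDerivAt_lin_exp (quadLin A θ) A 2 l
  have hCderiv_nonneg : ∀ l : ℝ,
      0 ≤ 2 * quadLin A θ (NormedSpace.exp ((2 * l) • A) * A) := by
    intro l
    have hE := exp_smul_posSemidef hAH (2 * l)
    have hP : (A * NormedSpace.exp ((2 * l) • A) * A).PosSemidef := by
      have := hE.mul_mul_conjTranspose_same A
      rwa [hAH] at this
    have h0 : 0 ≤ θ ⬝ᵥ (A * NormedSpace.exp ((2 * l) • A) * A) *ᵥ θ := by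
      simpa using hP.dotProduct_mulVec_nonneg θ
    have : quadLin A θ (NormedSpace.exp ((2 * l) • A) * A)
        = θ ⬝ᵥ (A * NormedSpace.exp ((2 * l) • A) * A) *ᵥ θ := by
      simp [quadLin, Matrix.mul_assoc]
    rw [this]
    positivity
  have hCmono : Monotone C :=
    monotone_of_deriv_nonneg (fun l => (hCderiv l).differentiableAt)
      (fun l => by rw [(hCderiv l).deriv]; exact hCderiv_nonneg l)
  refine ⟨hCmono, ?_⟩
  -- the trace part
  set T : ℝ → ℝ := fun t => traceLin S0 A (NormedSpace.exp (((-2) * t) • A)) with hTdef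
  have hTderiv : ∀ l : ℝ, HasDerivAt T
      ((-2) * traceLin S0 A (NormedSpace.exp (((-2) * l) • A) * A)) l :=
    fun l => hasDerivAt_lin_exp (traceLin S0 A) A (-2) l
  have hTderiv_nonpos : ∀ l : ℝ,
      (-2) * traceLin S0 A (NormedSpace.exp (((-2) * l) • A) * A) ≤ 0 := by
    intro l
    have hE := exp_smul_posSemidef hAH ((-2) * l)
    have hQ : (A * S0 * A).PosSemidef := by
      have := hS0.mul_mul_conjTranspose_same Aᴴ
      rwa [Matrix.conjTranspose_conjTranspose, hAH] at this
    have h0 : 0 ≤ (NormedSpace.exp (((-2) * l) • A) * (A * S0 * A)).trace :=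
      trace_mul_psd_nonneg hE hQ
    have heq : traceLin S0 A (NormedSpace.exp (((-2) * l) • A) * A)
        = (NormedSpace.exp (((-2) * l) • A) * (A * S0 * A)).trace := by
      simp [traceLin, Matrix.mul_assoc]
    rw [heq]
    nlinarith
  have hTanti : Antitone T :=
    antitone_of_deriv_nonpos (fun l => (hTderiv l).differentiableAt)
      (fun l => by rw [(hTderiv l).deriv]; exact hTderiv_nonpos l)
  have hGT : ∀ l : ℝ, G l = -4 * γ * C l + σ2 * T l := by
    intro l
    rw [hG l]
    congr 2
    have : (-(2 * l)) = (-2) * l := by ring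
    rw [this]
    rfl
  intro a b hab
  rw [hGT a, hGT b]
  have h1 : C a ≤ C b := hCmono hab
  have h2 : T b ≤ T a := hTanti hab
  nlinarith
end

section
/- Existence and uniqueness of the noise equilibrium (parts (2)–(3) of the fixed point theorem): let A ∈ ℝ^{n×n} be symmetric and write A = A₊ + A₋ where A₊, A₋ are symmetric, A₊ is positive semidefinite, −A₋ is positive semidefinite, and A₊A₋ = A₋A₊ = 0. Let Σ₀ be positive semidefinite, θ ∈ ℝ^n, γ ≥ 0, σ² ≥ 0, and define G(λ) = −4γ θ^⊤ A exp(2λA) θ + σ² Tr[exp(−2λA) Σ₀ A]. If σ² Tr[Σ₀ A₊] − 4γ θ^⊤ A₋ θ > 0 and −σ² Tr[Σ₀ A₋] + 4γ θ^⊤ A₊ θ > 0, then G is strictly decreasing on ℝ, G(λ) → +∞ as λ → −∞, G(λ) → −∞ as λ → +∞, and there exists a unique λ* ∈ ℝ with G(λ*) = 0. -/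
open Matrix Filter


namespace NoiseEqAux

variable {n : ℕ}

noncomputable def conj (U : Matrix (Fin n) (Fin n) ℝ) (d : Fin n → ℝ) :
    Matrix (Fin n) (Fin n) ℝ := U * Matrix.diagonal d * Uᵀ

lemma conj_mul {U : Matrix (Fin n) (Fin n) ℝ} (hU : Uᵀ * U = 1) (d e : Fin n → ℝ) :
    conj U d * conj U e = conj U (fun i => d i * e i) := by
  simp only [conj, Matrix.mul_assoc]
  rw [← Matrix.mul_assoc Uᵀ U, hU, Matrix.one_mul, ← Matrix.mul_assoc (Matrix.diagonal d),
    Matrix.diagonal_mul_diagonal]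

lemma conj_add (U : Matrix (Fin n) (Fin n) ℝ) (d e : Fin n → ℝ) :
    conj U d + conj U e = conj U (fun i => d i + e i) := by
  simp only [conj, ← Matrix.diagonal_add, ← Matrix.add_mul, ← Matrix.mul_add]

lemma conj_smul (U : Matrix (Fin n) (Fin n) ℝ) (c : ℝ) (d : Fin n → ℝ) :
    c • conj U d = conj U (fun i => c * d i) := by
  have h : (fun i => c * d i) = c • d := rfl
  rw [h, conj, conj, Matrix.diagonal_smul, Matrix.mul_smul, Matrix.smul_mul]

lemma conj_one {U : Matrix (Fin n) (Fin n) ℝ} (hU2 : U * Uᵀ = 1) :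
    conj U (fun _ => 1) = 1 := by
  simp only [conj]
  rw [show (Matrix.diagonal fun _ : Fin n => (1:ℝ)) = 1 from Matrix.diagonal_one,
    Matrix.mul_one, hU2]

lemma conj_exp {U : Matrix (Fin n) (Fin n) ℝ} (hU1 : Uᵀ * U = 1) (hU2 : U * Uᵀ = 1)
    (d : Fin n → ℝ) :
    NormedSpace.exp (conj U d) = conj U (fun i => Real.exp (d i)) := by
  have hunit : IsUnit U := ⟨⟨U, Uᵀ, hU2, hU1⟩, rfl⟩
  have hinv : U⁻¹ = Uᵀ := Matrix.inv_eq_left_inv hU1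
  rw [conj, ← hinv, Matrix.exp_conj U _ hunit, Matrix.exp_diagonal, Pi.exp_def, hinv]
  simp only [conj, ← Real.exp_eq_exp_ℝ]

lemma trace_diag (d e : Fin n → ℝ) (M : Matrix (Fin n) (Fin n) ℝ) :
    (Matrix.diagonal d * M * Matrix.diagonal e).trace = ∑ i, d i * M i i * e i := by
  simp [Matrix.trace, Matrix.diag, Matrix.mul_diagonal, Matrix.diagonal_mul]

lemma trace_conj_mul_mul_conj {U : Matrix (Fin n) (Fin n) ℝ} (hU1 : Uᵀ * U = 1)
    (S : Matrix (Fin n) (Fin n) ℝ) (d e : Fin n → ℝ) :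
    (conj U d * S * conj U e).trace = ∑ i, d i * (Uᵀ * S * U) i i * e i := by
  have h1 : conj U d * S * conj U e
      = U * (Matrix.diagonal d * (Uᵀ * S * U) * Matrix.diagonal e) * Uᵀ := by
    simp only [conj, Matrix.mul_assoc]
  rw [h1, Matrix.trace_mul_comm, ← Matrix.mul_assoc, hU1, Matrix.one_mul, trace_diag]

lemma dot_conj (U : Matrix (Fin n) (Fin n) ℝ) (d : Fin n → ℝ) (θ : Fin n → ℝ) :
    θ ⬝ᵥ (conj U d) *ᵥ θ = ∑ i, d i * ((Uᵀ *ᵥ θ) i) ^ 2 := by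
  rw [conj, ← Matrix.mulVec_mulVec, ← Matrix.mulVec_mulVec, Matrix.dotProduct_mulVec,
    ← Matrix.mulVec_transpose]
  simp only [dotProduct, Matrix.mulVec_diagonal]
  exact Finset.sum_congr rfl fun i _ => by ring

lemma conj_posSemidef {U : Matrix (Fin n) (Fin n) ℝ} (d : Fin n → ℝ) (hd : ∀ i, 0 ≤ d i) :
    (conj U d).PosSemidef := by
  have := (Matrix.posSemidef_diagonal_iff.mpr hd).mul_mul_conjTranspose_same U
  rwa [Matrix.conjTranspose_eq_transpose_of_trivial] at this

end NoiseEqAux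

/-- Existence and uniqueness of the noise equilibrium (parts (2)–(3) of the fixed point
theorem): with `A = A₊ + A₋` the spectral decomposition of a symmetric matrix into its
positive and negative parts, `S0 ⪰ 0`, `γ ≥ 0`, `σ² ≥ 0`, and the nondegeneracy conditions
`σ² Tr[S0A₊] − 4γ θᵀA₋θ > 0` and `−σ² Tr[S0A₋] + 4γ θᵀA₊θ > 0`, the drift
`G(λ) = −4γ θᵀ A exp(2λA) θ + σ² Tr[exp(−2λA) S0 A]` is strictly decreasing, tends to `+∞`
at `−∞` and to `−∞` at `+∞`, and has a unique zero `λ*`. -/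
theorem noise_equilibrium_exists_unique {n : ℕ}
    (A Ap An S0 : Matrix (Fin n) (Fin n) ℝ) (hA : A.IsSymm)
    (hsplit : A = Ap + An) (hApsymm : Ap.IsSymm) (hAnsymm : An.IsSymm)
    (hAp : Ap.PosSemidef) (hAn : (-An).PosSemidef)
    (hApAn : Ap * An = 0) (hAnAp : An * Ap = 0)
    (hS0 : S0.PosSemidef)
    (θ : Fin n → ℝ) (γ σ2 : ℝ) (hγ : 0 ≤ γ) (hσ2 : 0 ≤ σ2)
    (G : ℝ → ℝ)
    (hG : ∀ l : ℝ, G l = -4 * γ * (θ ⬝ᵥ (A * NormedSpace.exp ((2 * l) • A)).mulVec θ)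
        + σ2 * (NormedSpace.exp ((-(2 * l)) • A) * S0 * A).trace)
    (hpos : 0 < σ2 * (S0 * Ap).trace - 4 * γ * (θ ⬝ᵥ An.mulVec θ))
    (hneg : 0 < -(σ2 * (S0 * An).trace) + 4 * γ * (θ ⬝ᵥ Ap.mulVec θ)) :
    StrictAnti G ∧ Tendsto G atBot atTop ∧ Tendsto G atTop atBot ∧ ∃! l : ℝ, G l = 0 := by
  classical
  have hH : A.IsHermitian := by
    rwa [Matrix.IsHermitian, Matrix.conjTranspose_eq_transpose_of_trivial]
  set U : Matrix (Fin n) (Fin n) ℝ := (hH.eigenvectorUnitary : Matrix (Fin n) (Fin n) ℝ) with hUdef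
  set μ : Fin n → ℝ := hH.eigenvalues with hμdef
  have hU1 : Uᵀ * U = 1 := by
    have := Matrix.mem_unitaryGroup_iff'.mp hH.eigenvectorUnitary.2
    rwa [Matrix.star_eq_conjTranspose, Matrix.conjTranspose_eq_transpose_of_trivial] at this
  have hU2 : U * Uᵀ = 1 := by
    have := Matrix.mem_unitaryGroup_iff.mp hH.eigenvectorUnitary.2
    rwa [Matrix.star_eq_conjTranspose, Matrix.conjTranspose_eq_transpose_of_trivial] at this
  have hAspec : A = NoiseEqAux.conj U μ := by
    have := hH.spectral_theorem
    rw [Unitary.conjStarAlgAut_apply, Matrix.star_eq_conjTranspose, Matrix.conjTranspose_eq_transpose_of_trivial] at this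
    simpa [NoiseEqAux.conj, RCLike.ofReal_real_eq_id] using this
  set M : Matrix (Fin n) (Fin n) ℝ := Uᵀ * S0 * U with hMdef
  set w : Fin n → ℝ := Uᵀ *ᵥ θ with hwdef
  have hMpsd : M.PosSemidef := by
    have := hS0.conjTranspose_mul_mul_same U
    rwa [Matrix.conjTranspose_eq_transpose_of_trivial] at this
  have hm : ∀ i, 0 ≤ M i i := fun i => hMpsd.diag_nonneg
  -- identify positive and negative parts
  have hB : Ap - An = NoiseEqAux.conj U (fun i => |μ i|) := by
    have hPSD1 : (Ap - An).PosSemidef := by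
      have := hAp.add hAn
      rwa [← sub_eq_add_neg] at this
    have hPSD2 : (NoiseEqAux.conj U (fun i => |μ i|)).PosSemidef :=
      NoiseEqAux.conj_posSemidef _ (fun i => abs_nonneg _)
    refine (open scoped MatrixOrder in (CFC.sq_eq_sq_iff (Ap - An) _ (Matrix.nonneg_iff_posSemidef.mpr hPSD1) (Matrix.nonneg_iff_posSemidef.mpr hPSD2)).mp) ?_
    have h1 : (Ap - An) ^ 2 = Ap * Ap + An * An := by
      rw [pow_two, Matrix.sub_mul, Matrix.mul_sub, Matrix.mul_sub, hApAn, hAnAp]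
      abel
    have h2 : A ^ 2 = Ap * Ap + An * An := by
      rw [hsplit, pow_two, Matrix.add_mul, Matrix.mul_add, Matrix.mul_add, hApAn, hAnAp]
      abel
    have h3 : (NoiseEqAux.conj U (fun i => |μ i|)) ^ 2 = A ^ 2 := by
      rw [pow_two, NoiseEqAux.conj_mul hU1]
      conv_rhs => rw [hAspec]
      rw [pow_two, NoiseEqAux.conj_mul hU1]
      exact congrArg _ (funext fun i => abs_mul_abs_self _)
    rw [h1, h3, h2]
  have hApeq : Ap = NoiseEqAux.conj U (fun i => max (μ i) 0) := by
    have h4 : Ap = (2⁻¹ : ℝ) • (A + (Ap - An)) := by rw [hsplit]; module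
    rw [h4, hB]
    conv_lhs => rw [hAspec]
    rw [NoiseEqAux.conj_add, NoiseEqAux.conj_smul]
    refine congrArg _ (funext fun i => ?_)
    rcases le_or_gt (μ i) 0 with h | h
    · rw [abs_of_nonpos h, max_eq_right h]; ring
    · rw [abs_of_pos h, max_eq_left h.le]; ring
  have hAneq : An = NoiseEqAux.conj U (fun i => min (μ i) 0) := by
    have h4 : An = (2⁻¹ : ℝ) • (A + (-1 : ℝ) • (Ap - An)) := by rw [hsplit]; module
    rw [h4, hB]
    conv_lhs => rw [hAspec]
    rw [NoiseEqAux.conj_smul, NoiseEqAux.conj_add, NoiseEqAux.conj_smul]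
    refine congrArg _ (funext fun i => ?_)
    rcases le_or_gt (μ i) 0 with h | h
    · rw [abs_of_nonpos h, min_eq_left h]; ring
    · rw [abs_of_pos h, min_eq_right h.le]; ring
  -- trace and quadratic form identities
  have htrAp : (S0 * Ap).trace = ∑ i, max (μ i) 0 * M i i := by
    rw [Matrix.trace_mul_comm, hApeq,
      show NoiseEqAux.conj U (fun i => max (μ i) 0) * S0
          = NoiseEqAux.conj U (fun i => max (μ i) 0) * S0 * NoiseEqAux.conj U (fun _ => 1) by
        rw [NoiseEqAux.conj_one hU2, Matrix.mul_one],
      NoiseEqAux.trace_conj_mul_mul_conj hU1, ← hMdef]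
    exact Finset.sum_congr rfl fun i _ => by ring
  have htrAn : (S0 * An).trace = ∑ i, min (μ i) 0 * M i i := by
    rw [Matrix.trace_mul_comm, hAneq,
      show NoiseEqAux.conj U (fun i => min (μ i) 0) * S0
          = NoiseEqAux.conj U (fun i => min (μ i) 0) * S0 * NoiseEqAux.conj U (fun _ => 1) by
        rw [NoiseEqAux.conj_one hU2, Matrix.mul_one],
      NoiseEqAux.trace_conj_mul_mul_conj hU1, ← hMdef]
    exact Finset.sum_congr rfl fun i _ => by ring
  have hdotAp : θ ⬝ᵥ Ap *ᵥ θ = ∑ i, max (μ i) 0 * w i ^ 2 := by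
    rw [hApeq, NoiseEqAux.dot_conj, ← hwdef]
  have hdotAn : θ ⬝ᵥ An *ᵥ θ = ∑ i, min (μ i) 0 * w i ^ 2 := by
    rw [hAneq, NoiseEqAux.dot_conj, ← hwdef]
  -- the per-eigenvalue coefficients
  set p : Fin n → ℝ := fun i => σ2 * M i i * max (μ i) 0 - 4 * γ * w i ^ 2 * min (μ i) 0 with hpdef
  set q : Fin n → ℝ := fun i => -(σ2 * M i i * min (μ i) 0) + 4 * γ * w i ^ 2 * max (μ i) 0
    with hqdef
  have hp0 : ∀ i, 0 ≤ p i := by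
    intro i
    have h1 : 0 ≤ σ2 * M i i * max (μ i) 0 :=
      mul_nonneg (mul_nonneg hσ2 (hm i)) (le_max_right _ _)
    have h2 : 4 * γ * w i ^ 2 * min (μ i) 0 ≤ 0 :=
      mul_nonpos_of_nonneg_of_nonpos (by positivity) (min_le_right _ _)
    simp only [hpdef]
    linarith
  have hq0 : ∀ i, 0 ≤ q i := by
    intro i
    have h1 : 0 ≤ 4 * γ * w i ^ 2 * max (μ i) 0 :=
      mul_nonneg (by positivity) (le_max_right _ _)
    have h2 : σ2 * M i i * min (μ i) 0 ≤ 0 :=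
      mul_nonpos_of_nonneg_of_nonpos (mul_nonneg hσ2 (hm i)) (min_le_right _ _)
    simp only [hqdef]
    linarith
  have hsump : 0 < ∑ i, p i := by
    have h := hpos
    rw [htrAp, hdotAn, Finset.mul_sum, Finset.mul_sum, ← Finset.sum_sub_distrib] at h
    exact h.trans_eq (Finset.sum_congr rfl fun i _ => by simp only [hpdef]; ring)
  have hsumq : 0 < ∑ i, q i := by
    have h := hneg
    rw [htrAn, hdotAp, Finset.mul_sum, Finset.mul_sum, ← Finset.sum_neg_distrib,
      ← Finset.sum_add_distrib] at h
    exact h.trans_eq (Finset.sum_congr rfl fun i _ => by simp only [hqdef]; ring)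
  have hpν : ∀ i, 0 < p i → 0 < |μ i| := by
    intro i hpi
    refine abs_pos.mpr fun h0 => ?_
    simp [hpdef, h0] at hpi
  have hqν : ∀ i, 0 < q i → 0 < |μ i| := by
    intro i hqi
    refine abs_pos.mpr fun h0 => ?_
    simp [hqdef, h0] at hqi
  -- the scalar form of G
  set g : Fin n → ℝ → ℝ :=
    fun i l => p i * Real.exp (-(2 * l) * |μ i|) - q i * Real.exp (2 * l * |μ i|) with hgdef
  have hGsum : ∀ l, G l = ∑ i, g i l := by
    intro l
    rw [hG l]
    have e1 : A * NormedSpace.exp ((2 * l) • A)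
        = NoiseEqAux.conj U (fun i => μ i * Real.exp (2 * l * μ i)) := by
      conv_lhs => rw [hAspec]
      rw [NoiseEqAux.conj_smul, NoiseEqAux.conj_exp hU1 hU2, NoiseEqAux.conj_mul hU1]
    have e2 : NormedSpace.exp ((-(2 * l)) • A) * S0 * A
        = NoiseEqAux.conj U (fun i => Real.exp (-(2 * l) * μ i)) * S0
            * NoiseEqAux.conj U μ := by
      conv_lhs => rw [hAspec]
      rw [NoiseEqAux.conj_smul, NoiseEqAux.conj_exp hU1 hU2]
    rw [e1, NoiseEqAux.dot_conj, e2, NoiseEqAux.trace_conj_mul_mul_conj hU1, ← hwdef, ← hMdef,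
      Finset.mul_sum, Finset.mul_sum, ← Finset.sum_add_distrib]
    refine Finset.sum_congr rfl fun i _ => ?_
    simp only [hgdef, hpdef, hqdef]
    rcases lt_trichotomy (μ i) 0 with h | h | h
    · rw [abs_of_neg h, max_eq_right h.le, min_eq_left h.le,
        show -(2 * l) * -μ i = 2 * l * μ i by ring,
        show 2 * l * -μ i = -(2 * l) * μ i by ring]
      ring
    · simp [h]
    · rw [abs_of_pos h, max_eq_left h.le, min_eq_right h.le]
      ring
  -- monotonicity of the summands
  have hgant : ∀ i, Antitone (g i) := by
    intro i a b hab
    have hν : 0 ≤ |μ i| := abs_nonneg _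
    have h1 : Real.exp (-(2 * b) * |μ i|) ≤ Real.exp (-(2 * a) * |μ i|) :=
      Real.exp_le_exp.mpr (by nlinarith)
    have h2 : Real.exp (2 * a * |μ i|) ≤ Real.exp (2 * b * |μ i|) :=
      Real.exp_le_exp.mpr (by nlinarith)
    have h3 := mul_le_mul_of_nonneg_left h1 (hp0 i)
    have h4 := mul_le_mul_of_nonneg_left h2 (hq0 i)
    simp only [hgdef]
    linarith
  have hgstrict : ∀ i, 0 < q i → ∀ a b : ℝ, a < b → g i b < g i a := by
    intro i hqi a b hab
    have hν : 0 < |μ i| := hqν i hqi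
    have h1 : Real.exp (-(2 * b) * |μ i|) ≤ Real.exp (-(2 * a) * |μ i|) :=
      Real.exp_le_exp.mpr (by nlinarith)
    have h2 : Real.exp (2 * a * |μ i|) < Real.exp (2 * b * |μ i|) :=
      Real.exp_lt_exp.mpr (by nlinarith)
    have h3 := mul_le_mul_of_nonneg_left h1 (hp0 i)
    have h4 := mul_lt_mul_of_pos_left h2 hqi
    simp only [hgdef]
    linarith
  -- special indices
  obtain ⟨i₀, hqi₀⟩ : ∃ i, 0 < q i := by
    by_contra hcon
    push_neg at hcon
    exact absurd hsumq (not_lt.mpr (Finset.sum_nonpos fun i _ => hcon i))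
  obtain ⟨i₁, hpi₁⟩ : ∃ i, 0 < p i := by
    by_contra hcon
    push_neg at hcon
    exact absurd hsump (not_lt.mpr (Finset.sum_nonpos fun i _ => hcon i))
  have hν₀ : 0 < |μ i₀| := hqν i₀ hqi₀
  have hν₁ : 0 < |μ i₁| := hpν i₁ hpi₁
  -- strict antitonicity
  have hSA : StrictAnti G := by
    intro a b hab
    rw [hGsum a, hGsum b]
    exact Finset.sum_lt_sum (fun i _ => hgant i hab.le)
      ⟨i₀, Finset.mem_univ _, hgstrict i₀ hqi₀ a b hab⟩
  -- tendsto atTop atBot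
  have htt : Tendsto G atTop atBot := by
    have hexp : Tendsto (fun l : ℝ => 2 * l * |μ i₀|) atTop atTop := by
      have h := Filter.Tendsto.atTop_mul_const (by positivity : (0:ℝ) < 2 * |μ i₀|)
        (tendsto_id (α := ℝ) (x := atTop))
      exact (h.congr fun l => by simp only [id]; ring)
    have hexp2 : Tendsto (fun l => q i₀ * Real.exp (2 * l * |μ i₀|)) atTop atTop :=
      (Real.tendsto_exp_atTop.comp hexp).const_mul_atTop hqi₀
    have hbound : Tendsto
        (fun l => ((∑ i ∈ Finset.univ.erase i₀, g i 0) + p i₀)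
          + -(q i₀ * Real.exp (2 * l * |μ i₀|))) atTop atBot := by
      exact tendsto_atBot_add_const_left _ _ (tendsto_neg_atTop_atBot.comp hexp2)
    refine tendsto_atBot_mono' atTop ?_ hbound
    filter_upwards [eventually_ge_atTop (0 : ℝ)] with l hl
    rw [hGsum l, ← Finset.add_sum_erase _ _ (Finset.mem_univ i₀)]
    have h1 : ∑ i ∈ Finset.univ.erase i₀, g i l ≤ ∑ i ∈ Finset.univ.erase i₀, g i 0 :=
      Finset.sum_le_sum fun i _ => hgant i hl
    have h2 : g i₀ l ≤ p i₀ - q i₀ * Real.exp (2 * l * |μ i₀|) := by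
      have he : Real.exp (-(2 * l) * |μ i₀|) ≤ 1 := by
        rw [Real.exp_le_one_iff]
        nlinarith [abs_nonneg (μ i₀)]
      have := mul_le_mul_of_nonneg_left he (hp0 i₀)
      simp only [hgdef]
      linarith
    simp only [hgdef] at h1 h2 ⊢
    linarith
  -- tendsto atBot atTop
  have hbt : Tendsto G atBot atTop := by
    have hexp : Tendsto (fun l : ℝ => -(2 * l) * |μ i₁|) atBot atTop := by
      have h := (Filter.Tendsto.atTop_mul_const (by positivity : (0:ℝ) < 2 * |μ i₁|)
        tendsto_neg_atBot_atTop)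
      exact (h.congr fun l => by ring)
    have hexp2 : Tendsto (fun l => p i₁ * Real.exp (-(2 * l) * |μ i₁|)) atBot atTop :=
      (Real.tendsto_exp_atTop.comp hexp).const_mul_atTop hpi₁
    have hbound : Tendsto
        (fun l => ((∑ i ∈ Finset.univ.erase i₁, g i 0) + -(q i₁))
          + p i₁ * Real.exp (-(2 * l) * |μ i₁|)) atBot atTop := by
      exact tendsto_atTop_add_const_left _ _ hexp2
    refine tendsto_atTop_mono' atBot ?_ hbound
    filter_upwards [eventually_le_atBot (0 : ℝ)] with l hl
    rw [hGsum l, ← Finset.add_sum_erase _ _ (Finset.mem_univ i₁)]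
    have h1 : ∑ i ∈ Finset.univ.erase i₁, g i 0 ≤ ∑ i ∈ Finset.univ.erase i₁, g i l :=
      Finset.sum_le_sum fun i _ => hgant i hl
    have h2 : p i₁ * Real.exp (-(2 * l) * |μ i₁|) - q i₁ ≤ g i₁ l := by
      have he : Real.exp (2 * l * |μ i₁|) ≤ 1 := by
        rw [Real.exp_le_one_iff]
        nlinarith [abs_nonneg (μ i₁)]
      have := mul_le_mul_of_nonneg_left he (hq0 i₁)
      simp only [hgdef]
      linarith
    simp only [hgdef] at h1 h2 ⊢
    linarith
  -- existence and uniqueness of the zero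
  have hcont : Continuous G := by
    rw [show G = fun l => ∑ i, g i l from funext hGsum]
    refine continuous_finset_sum _ fun i _ => ?_
    simp only [hgdef]
    fun_prop
  obtain ⟨a, ha⟩ : ∃ a, 0 < G a := (hbt.eventually (eventually_gt_atTop 0)).exists
  obtain ⟨b, hb⟩ : ∃ b, G b < 0 := (htt.eventually (eventually_lt_atBot 0)).exists
  have hab : a < b := by
    by_contra hc
    push_neg at hc
    have := hSA.antitone hc
    linarith
  obtain ⟨l₀, -, hl₀⟩ := intermediate_value_Icc' hab.le hcont.continuousOn
    (Set.mem_Icc.mpr ⟨hb.le, ha.le⟩)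
  exact ⟨hSA, hbt, htt, ⟨l₀, hl₀, fun y hy => hSA.injective (hy.trans hl₀.symm)⟩⟩
end

section
/- Differentiability of the equilibrium point (part (4) of the fixed point theorem): let A ∈ ℝ^{n×n} be symmetric, γ ≥ 0, σ² ≥ 0, and let Σ : ℝ^n → ℝ^{n×n} be a continuously differentiable map taking symmetric values. Define G(θ, λ) = −4γ θ^⊤ A exp(2λA) θ + σ² Tr[exp(−2λA) Σ(θ) A]. Suppose at some θ₀ ∈ ℝ^n and λ₀ ∈ ℝ we have G(θ₀, λ₀) = 0 and 4γ θ₀^⊤ A² exp(2λ₀A) θ₀ + σ² Tr[exp(−2λ₀A) Σ(θ₀) A²] > 0. Then there exist an open neighborhood V of θ₀ and a differentiable function λ* : V → ℝ with λ*(θ₀) = λ₀ and G(θ, λ*(θ)) = 0 for all θ ∈ V. -/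
open Matrix

section Helpers

open NormedSpace

variable {n : ℕ}

private def entryLM (i j : Fin n) : Matrix (Fin n) (Fin n) ℝ →ₗ[ℝ] ℝ where
  toFun M := M i j
  map_add' _ _ := rfl
  map_smul' _ _ := rfl

private def quadLM (A : Matrix (Fin n) (Fin n) ℝ) (θ : Fin n → ℝ) :
    Matrix (Fin n) (Fin n) ℝ →ₗ[ℝ] ℝ where
  toFun M := θ ⬝ᵥ (A * M).mulVec θ
  map_add' M N := by simp [Matrix.mul_add, Matrix.add_mulVec]
  map_smul' r M := by simp [Matrix.mul_smul, Matrix.smul_mulVec]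

private def trLM (S B : Matrix (Fin n) (Fin n) ℝ) :
    Matrix (Fin n) (Fin n) ℝ →ₗ[ℝ] ℝ where
  toFun M := (M * S * B).trace
  map_add' M N := by simp [Matrix.add_mul]
  map_smul' r M := by simp [Matrix.smul_mul]

private lemma matexp_hasDerivAt (B : Matrix (Fin n) (Fin n) ℝ)
    (L : Matrix (Fin n) (Fin n) ℝ →ₗ[ℝ] ℝ) (t : ℝ) :
    HasDerivAt (fun s : ℝ => L (exp (s • B))) (L (exp (t • B) * B)) t := by
  letI : SeminormedRing (Matrix (Fin n) (Fin n) ℝ) := Matrix.linftyOpSemiNormedRing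
  letI : NormedRing (Matrix (Fin n) (Fin n) ℝ) := Matrix.linftyOpNormedRing
  letI : NormedAlgebra ℝ (Matrix (Fin n) (Fin n) ℝ) := Matrix.linftyOpNormedAlgebra
  exact (LinearMap.toContinuousLinearMap L).hasFDerivAt.comp_hasDerivAt t
    (hasDerivAt_exp_smul_const B t)

private lemma matexp_contDiff (B : Matrix (Fin n) (Fin n) ℝ)
    (L : Matrix (Fin n) (Fin n) ℝ →ₗ[ℝ] ℝ) :
    ContDiff ℝ 1 (fun s : ℝ => L (exp (s • B))) := by
  letI : SeminormedRing (Matrix (Fin n) (Fin n) ℝ) := Matrix.linftyOpSemiNormedRing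
  letI : NormedRing (Matrix (Fin n) (Fin n) ℝ) := Matrix.linftyOpNormedRing
  letI : NormedAlgebra ℝ (Matrix (Fin n) (Fin n) ℝ) := Matrix.linftyOpNormedAlgebra
  rw [contDiff_iff_contDiffAt]
  intro t
  have h1 : AnalyticAt ℝ exp (t • B) :=
    analyticAt_exp_of_mem_ball _ (by rw [expSeries_radius_eq_top]; exact edist_lt_top _ _)
  have h2 : ContDiffAt ℝ 1 (fun s : ℝ => s • B) t :=
    (contDiff_id.smul contDiff_const).contDiffAt
  exact ((LinearMap.toContinuousLinearMap L).contDiff.contDiffAt).comp _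
    (h1.contDiffAt.comp t h2)

private lemma exp_comm (A : Matrix (Fin n) (Fin n) ℝ) (r : ℝ) :
    Commute (exp (r • A)) A := by
  letI : SeminormedRing (Matrix (Fin n) (Fin n) ℝ) := Matrix.linftyOpSemiNormedRing
  letI : NormedRing (Matrix (Fin n) (Fin n) ℝ) := Matrix.linftyOpNormedRing
  letI : NormedAlgebra ℝ (Matrix (Fin n) (Fin n) ℝ) := Matrix.linftyOpNormedAlgebra
  exact (((Commute.refl A).smul_left r).exp_left)

private lemma trace_cyc (A S E : Matrix (Fin n) (Fin n) ℝ) (h : Commute E A) :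
    ((E * A) * S * A).trace = (E * S * (A * A)).trace := by
  have h1 : E * A = A * E := h
  calc ((E * A) * S * A).trace = (A * (E * S * A)).trace := by rw [h1]; noncomm_ring
    _ = ((E * S * A) * A).trace := Matrix.trace_mul_comm _ _
    _ = (E * S * (A * A)).trace := by rw [Matrix.mul_assoc]

private lemma hE1 (A : Matrix (Fin n) (Fin n) ℝ) (i j : Fin n) :
    ContDiff ℝ 1 (fun p : (Fin n → ℝ) × ℝ => exp ((2 * p.2) • A) i j) := by
  have h := (matexp_contDiff ((2:ℝ) • A) (entryLM i j)).comp (contDiff_snd (E := Fin n → ℝ))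
  convert h using 2 with p
  show _ = exp (p.2 • (2:ℝ) • A) i j
  rw [smul_smul, mul_comm]

private lemma hE2 (A : Matrix (Fin n) (Fin n) ℝ) (i j : Fin n) :
    ContDiff ℝ 1 (fun p : (Fin n → ℝ) × ℝ => exp ((-(2 * p.2)) • A) i j) := by
  have h := (matexp_contDiff ((-2:ℝ) • A) (entryLM i j)).comp (contDiff_snd (E := Fin n → ℝ))
  convert h using 2 with p
  show _ = exp (p.2 • (-2:ℝ) • A) i j
  rw [smul_smul, show p.2 * (-2:ℝ) = -(2 * p.2) by ring]

private lemma hθi (i : Fin n) : ContDiff ℝ 1 (fun p : (Fin n → ℝ) × ℝ => p.1 i) :=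
  ((ContinuousLinearMap.proj i).comp (ContinuousLinearMap.fst ℝ (Fin n → ℝ) ℝ)).contDiff

private lemma quad_contDiff (A B : Matrix (Fin n) (Fin n) ℝ) :
    ContDiff ℝ 1 (fun p : (Fin n → ℝ) × ℝ =>
      p.1 ⬝ᵥ (B * exp ((2 * p.2) • A)).mulVec p.1) := by
  simp only [dotProduct, Matrix.mulVec, Matrix.mul_apply]
  exact ContDiff.sum fun i _ => (hθi i).mul <| ContDiff.sum fun j _ =>
    (ContDiff.sum fun k _ => contDiff_const.mul (hE1 A k j)).mul (hθi j)

private lemma tr_contDiff (A C : Matrix (Fin n) (Fin n) ℝ)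
    (Sig : (Fin n → ℝ) → Matrix (Fin n) (Fin n) ℝ)
    (hSigC1 : ∀ i j : Fin n, ContDiff ℝ 1 fun θ => Sig θ i j) :
    ContDiff ℝ 1 (fun p : (Fin n → ℝ) × ℝ =>
      (exp ((-(2 * p.2)) • A) * Sig p.1 * C).trace) := by
  simp only [Matrix.trace, Matrix.diag, Matrix.mul_apply]
  exact ContDiff.sum fun i _ => ContDiff.sum fun k _ =>
    (ContDiff.sum fun m _ => (hE2 A i m).mul ((hSigC1 m k).comp contDiff_fst)).mul contDiff_const

private lemma G_hasDerivAt (A : Matrix (Fin n) (Fin n) ℝ)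
    (Sig : (Fin n → ℝ) → Matrix (Fin n) (Fin n) ℝ) (γ σ2 : ℝ) (θ : Fin n → ℝ) (l : ℝ) :
    HasDerivAt (fun s : ℝ => -4 * γ * (θ ⬝ᵥ (A * exp ((2 * s) • A)).mulVec θ)
        + σ2 * (exp ((-(2 * s)) • A) * Sig θ * A).trace)
      (-2 * (4 * γ * (θ ⬝ᵥ (A * A * exp ((2 * l) • A)).mulVec θ)
        + σ2 * (exp ((-(2 * l)) • A) * Sig θ * (A * A)).trace)) l := by
  have key1 : ∀ s : ℝ, s • ((2:ℝ) • A) = (2 * s) • A := fun s => by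
    rw [smul_smul, mul_comm]
  have key2 : ∀ s : ℝ, s • ((-2:ℝ) • A) = (-(2 * s)) • A := fun s => by
    rw [smul_smul, show s * (-2:ℝ) = -(2 * s) by ring]
  have H1 : HasDerivAt (fun s : ℝ => θ ⬝ᵥ (A * exp ((2 * s) • A)).mulVec θ)
      (2 * (θ ⬝ᵥ (A * A * exp ((2 * l) • A)).mulVec θ)) l := by
    have h := matexp_hasDerivAt ((2:ℝ) • A) (quadLM A θ) l
    simp only [key1] at h
    convert h using 1
    · rfl
    have hc : exp ((2 * l) • A) * A = A * exp ((2 * l) • A) := exp_comm A (2 * l)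
    rw [mul_smul_comm, _root_.map_smul, quadLM]
    simp only [LinearMap.coe_mk, AddHom.coe_mk, smul_eq_mul]
    rw [hc, ← Matrix.mul_assoc]
  have H2 : HasDerivAt (fun s : ℝ => (exp ((-(2 * s)) • A) * Sig θ * A).trace)
      (-2 * (exp ((-(2 * l)) • A) * Sig θ * (A * A)).trace) l := by
    have h := matexp_hasDerivAt ((-2:ℝ) • A) (trLM (Sig θ) A) l
    simp only [key2] at h
    convert h using 1
    · rfl
    rw [mul_smul_comm, _root_.map_smul, trLM]
    simp only [LinearMap.coe_mk, AddHom.coe_mk, smul_eq_mul]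
    rw [trace_cyc A (Sig θ) _ (exp_comm A (-(2 * l)))]
  have := (H1.const_mul (-4 * γ)).add (H2.const_mul σ2)
  exact this.congr_deriv (by ring)

private lemma key (F c : (Fin n → ℝ) × ℝ → ℝ)
    (hF : ContDiff ℝ 1 F)
    (hc : ∀ p : (Fin n → ℝ) × ℝ, HasDerivAt (fun s => F (p.1, s)) (c p) p.2)
    (p : (Fin n → ℝ) × ℝ) (hz : F p = 0) (hcp : c p ≠ 0) :
    ∃ (U : Set ((Fin n → ℝ) × ℝ)) (W : Set (Fin n → ℝ)) (lam : (Fin n → ℝ) → ℝ),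
      IsOpen U ∧ p ∈ U ∧ IsOpen W ∧ p.1 ∈ W ∧ lam p.1 = p.2 ∧
      ContinuousOn lam W ∧ DifferentiableAt ℝ lam p.1 ∧
      (∀ θ ∈ W, F (θ, lam θ) = 0 ∧ (θ, lam θ) ∈ U) ∧
      (∀ q ∈ U, ∀ q' ∈ U, F q = F q' → q.1 = q'.1 → q = q') := by
  set f' := fderiv ℝ F p with hf'def
  have hfd : HasStrictFDerivAt F f' p := hF.contDiffAt.hasStrictFDerivAt one_ne_zero
  have hder : HasDerivAt (fun s => F (p.1, s)) (f' ((0 : Fin n → ℝ), (1 : ℝ))) p.2 := by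
    have hin : HasDerivAt (fun s : ℝ => ((p.1 : Fin n → ℝ), s))
        (((0 : Fin n → ℝ), (1 : ℝ))) p.2 := (hasDerivAt_const _ _).prodMk (hasDerivAt_id _)
    have := (hfd.hasFDerivAt.comp_hasDerivAt p.2 (by simpa using hin) :)
    exact this
  have hkey : f' ((0 : Fin n → ℝ), (1 : ℝ)) = c p := hder.unique (hc p)
  have hsplit : ∀ (v : Fin n → ℝ) (t : ℝ), f' (v, t) = f' (v, 0) + t * c p := by
    intro v t
    have hvt : ((v, t) : (Fin n → ℝ) × ℝ) = (v, 0) + t • ((0 : Fin n → ℝ), (1 : ℝ)) := by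
      simp [Prod.ext_iff]
    rw [hvt, map_add, _root_.map_smul, hkey, smul_eq_mul]
  set φ : ImplicitFunctionData ℝ ((Fin n → ℝ) × ℝ) ℝ (Fin n → ℝ) :=
    { leftFun := F
      leftDeriv := f'
      rightFun := Prod.fst
      rightDeriv := ContinuousLinearMap.fst ℝ (Fin n → ℝ) ℝ
      pt := p
      hasStrictFDerivAt_leftFun := hfd
      hasStrictFDerivAt_rightFun := (ContinuousLinearMap.fst ℝ (Fin n → ℝ) ℝ).hasStrictFDerivAt
      range_leftDeriv := LinearMap.range_eq_top.2 fun y => by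
        refine ⟨(y / c p) • ((0 : Fin n → ℝ), (1 : ℝ)), ?_⟩
        show f' ((y / c p) • ((0 : Fin n → ℝ), (1 : ℝ))) = y
        rw [_root_.map_smul, hkey, smul_eq_mul, div_mul_cancel₀ _ hcp]
      range_rightDeriv := LinearMap.range_eq_top.2 fun v => ⟨(v, 0), rfl⟩
      isCompl_ker := by
        constructor
        · rw [Submodule.disjoint_def]
          intro x hxl hxr
          have hx1 : x.1 = 0 := hxr
          have hx0 : f' (x.1, x.2) = 0 := by
            rw [show (x.1, x.2) = x from rfl]; exact hxl
          rw [hsplit, hx1] at hx0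
          have hz00 : f' ((0 : Fin n → ℝ), (0 : ℝ)) = 0 := map_zero f'
          rw [hz00, zero_add] at hx0
          have : x.2 = 0 := by
            rcases mul_eq_zero.1 hx0 with h | h
            · exact h
            · exact absurd h hcp
          exact Prod.ext hx1 this
        · rw [codisjoint_iff_le_sup]
          intro x _
          refine Submodule.mem_sup.2 ⟨(x.1, -(f' (x.1, 0)) / c p), ?_,
            (0, x.2 + f' (x.1, 0) / c p), ?_, ?_⟩
          · show f' _ = 0
            rw [hsplit, div_mul_cancel₀ _ hcp]
            ring
          · show ((0 : Fin n → ℝ), x.2 + f' (x.1, 0) / c p).1 = 0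
            rfl
          · refine Prod.ext (by simp) ?_
            show -(f' (x.1, 0)) / c p + (x.2 + f' (x.1, 0) / c p) = x.2
            ring }
    with hφdef
  set phom := φ.toOpenPartialHomeomorph with hphomdef
  have hptsrc : p ∈ phom.source := φ.pt_mem_toOpenPartialHomeomorph_source
  have hmap : ∀ x, phom x = (F x, x.1) := fun x => rfl
  have hptar : (0, p.1) ∈ phom.target := by
    have := phom.map_source hptsrc
    rwa [hmap, hz] at this
  set lam : (Fin n → ℝ) → ℝ := fun θ => (phom.symm (0, θ)).2 with hlamdef
  set W : Set (Fin n → ℝ) := {θ | ((0 : ℝ), θ) ∈ phom.target} with hWdef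
  have hcont0 : Continuous fun θ : Fin n → ℝ => ((0 : ℝ), θ) :=
    continuous_const.prodMk continuous_id
  have hWopen : IsOpen W := phom.open_target.preimage hcont0
  have hpW : p.1 ∈ W := hptar
  have hlamcont : ContinuousOn lam W := by
    have h1 : ContinuousOn (fun θ : Fin n → ℝ => phom.symm (0, θ)) W :=
      phom.continuousOn_symm.comp hcont0.continuousOn (fun θ hθ => hθ)
    exact continuous_snd.comp_continuousOn h1
  have hsymmp : phom.symm (0, p.1) = p := by
    have := phom.left_inv hptsrc
    rwa [hmap, hz] at this
  have hlamp : lam p.1 = p.2 := by rw [hlamdef]; simp only; rw [hsymmp]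
  have hWprop : ∀ θ ∈ W, F (θ, lam θ) = 0 ∧ (θ, lam θ) ∈ phom.source := by
    intro θ hθ
    have hsrc : phom.symm (0, θ) ∈ phom.source := phom.map_target hθ
    have hr : phom (phom.symm (0, θ)) = (0, θ) := phom.right_inv hθ
    rw [hmap] at hr
    have h1 : F (phom.symm (0, θ)) = 0 := congrArg Prod.fst hr
    have h2 : (phom.symm (0, θ)).1 = θ := congrArg Prod.snd hr
    have hq : ((θ, lam θ) : (Fin n → ℝ) × ℝ) = phom.symm (0, θ) := by
      rw [hlamdef]; exact Prod.ext h2.symm rfl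
    rw [hq]
    exact ⟨h1, hsrc⟩
  have hdiff : DifferentiableAt ℝ lam p.1 := by
    set g'inv : (Fin n → ℝ) →L[ℝ] ((Fin n → ℝ) × ℝ) :=
      (ContinuousLinearMap.id ℝ (Fin n → ℝ)).prod
        ((-(c p)⁻¹) • (f'.comp (ContinuousLinearMap.inl ℝ (Fin n → ℝ) ℝ))) with hginv
    have h1 : φ.rightDeriv.comp g'inv = ContinuousLinearMap.id ℝ (Fin n → ℝ) := by
      ext v; rfl
    have h2 : φ.leftDeriv.comp g'inv = 0 := by
      ext v
      show f' (v, -(c p)⁻¹ * f' (v, 0)) = 0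
      rw [hsplit]
      field_simp
      ring
    have h3 := φ.implicitFunction_hasStrictFDerivAt g'inv h1 h2
    have h4 : φ.leftFun φ.pt = 0 := hz
    rw [h4] at h3
    have h5 : DifferentiableAt ℝ (φ.implicitFunction 0) p.1 := h3.differentiableAt
    have h6 : lam = fun θ => (φ.implicitFunction 0 θ).2 := rfl
    rw [h6]
    exact h5.snd
  refine ⟨phom.source, W, lam, phom.open_source, hptsrc, hWopen, hpW, hlamp, hlamcont, hdiff,
    hWprop, ?_⟩
  intro q hq q' hq' hFq h1q
  refine phom.injOn hq hq' ?_
  rw [hmap, hmap, hFq, h1q]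

private lemma aux_ift (F c : (Fin n → ℝ) × ℝ → ℝ)
    (hF : ContDiff ℝ 1 F)
    (hc : ∀ p : (Fin n → ℝ) × ℝ, HasDerivAt (fun s => F (p.1, s)) (c p) p.2)
    (hccont : Continuous c)
    (p₀ : (Fin n → ℝ) × ℝ) (hz : F p₀ = 0) (hc0 : c p₀ ≠ 0) :
    ∃ V : Set (Fin n → ℝ), IsOpen V ∧ p₀.1 ∈ V ∧ ∃ lam : (Fin n → ℝ) → ℝ,
      lam p₀.1 = p₀.2 ∧ (∀ θ ∈ V, F (θ, lam θ) = 0) ∧ DifferentiableOn ℝ lam V := by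
  obtain ⟨U₀, W₀, lam, hU₀, hpU₀, hW₀, hpW₀, hlamp, hlamc, _, hW₀prop, huniq⟩ :=
    key F c hF hc p₀ hz hc0
  set Uc : Set ((Fin n → ℝ) × ℝ) := {q | c q ≠ 0} with hUcdef
  have hUc : IsOpen Uc := isOpen_compl_singleton.preimage hccont
  set V := W₀ ∩ (fun θ => (θ, lam θ)) ⁻¹' (U₀ ∩ Uc) with hVdef
  have hmapc : ContinuousOn (fun θ => (θ, lam θ)) W₀ := continuousOn_id.prodMk hlamc
  have hVopen : IsOpen V := hmapc.isOpen_inter_preimage hW₀ (hU₀.inter hUc)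
  have hp₀V : p₀.1 ∈ V := by
    refine ⟨hpW₀, ?_⟩
    have : ((p₀.1, lam p₀.1) : (Fin n → ℝ) × ℝ) = p₀ := by rw [hlamp]
    show ((p₀.1, lam p₀.1) : (Fin n → ℝ) × ℝ) ∈ U₀ ∩ Uc
    rw [this]
    exact ⟨hpU₀, hc0⟩
  refine ⟨V, hVopen, hp₀V, lam, hlamp, fun θ hθ => (hW₀prop θ hθ.1).1, ?_⟩
  intro θ₁ hθ₁
  have hq₁U₀ : ((θ₁, lam θ₁) : (Fin n → ℝ) × ℝ) ∈ U₀ := hθ₁.2.1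
  have hq₁c : c (θ₁, lam θ₁) ≠ 0 := hθ₁.2.2
  have hq₁z : F (θ₁, lam θ₁) = 0 := (hW₀prop θ₁ hθ₁.1).1
  obtain ⟨U₁, W₁, lam₁, hU₁, hq₁U₁, hW₁, hq₁W₁, hlam₁p, hlam₁c, hdiff₁, hW₁prop, _⟩ :=
    key F c hF hc (θ₁, lam θ₁) hq₁z hq₁c
  set N := W₁ ∩ (fun θ => (θ, lam₁ θ)) ⁻¹' U₀ with hNdef
  have hNopen : IsOpen N := (continuousOn_id.prodMk hlam₁c).isOpen_inter_preimage hW₁ hU₀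
  have hθ₁N : θ₁ ∈ N := by
    refine ⟨hq₁W₁, ?_⟩
    show ((θ₁, lam₁ θ₁) : (Fin n → ℝ) × ℝ) ∈ U₀
    rw [show lam₁ θ₁ = lam θ₁ from hlam₁p]
    exact hq₁U₀
  have heq : lam =ᶠ[nhds θ₁] lam₁ := by
    filter_upwards [hVopen.mem_nhds hθ₁, hNopen.mem_nhds hθ₁N] with θ hV hN
    have h1 : ((θ, lam θ) : (Fin n → ℝ) × ℝ) ∈ U₀ := hV.2.1
    have h2 : ((θ, lam₁ θ) : (Fin n → ℝ) × ℝ) ∈ U₀ := hN.2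
    have h3 : F (θ, lam θ) = 0 := (hW₀prop θ hV.1).1
    have h4 : F (θ, lam₁ θ) = 0 := (hW₁prop θ hN.1).1
    have := huniq _ h1 _ h2 (h3.trans h4.symm) rfl
    exact congrArg Prod.snd this
  exact (hdiff₁.congr_of_eventuallyEq heq).differentiableWithinAt

end Helpers

/-- Differentiability of the equilibrium point (part (4) of the fixed point theorem): if the
gradient covariance `Σ` is continuously differentiable (entrywise) and takes symmetric values,
`G(θ,λ) = −4γ θᵀAexp(2λA)θ + σ² Tr[exp(−2λA)Σ(θ)A]` vanishes at `(θ₀, λ₀)`, and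
`4γ θ₀ᵀA²exp(2λ₀A)θ₀ + σ² Tr[exp(−2λ₀A)Σ(θ₀)A²] > 0` (so that `∂G/∂λ ≠ 0`), then there is a
differentiable local solution `λ*(θ)` of `G(θ, λ*(θ)) = 0` around `θ₀` with `λ*(θ₀) = λ₀`. -/
theorem equilibrium_point_differentiable {n : ℕ}
    (A : Matrix (Fin n) (Fin n) ℝ) (hA : A.IsSymm)
    (γ σ2 : ℝ) (hγ : 0 ≤ γ) (hσ2 : 0 ≤ σ2)
    (Sig : (Fin n → ℝ) → Matrix (Fin n) (Fin n) ℝ)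
    (hSigC1 : ∀ i j : Fin n, ContDiff ℝ 1 fun θ => Sig θ i j)
    (hSigSymm : ∀ θ, (Sig θ).IsSymm)
    (G : (Fin n → ℝ) → ℝ → ℝ)
    (hG : ∀ (θ : Fin n → ℝ) (l : ℝ),
      G θ l = -4 * γ * (θ ⬝ᵥ (A * NormedSpace.exp ((2 * l) • A)).mulVec θ)
        + σ2 * (NormedSpace.exp ((-(2 * l)) • A) * Sig θ * A).trace)
    (θ₀ : Fin n → ℝ) (l₀ : ℝ) (hzero : G θ₀ l₀ = 0)
    (hnondeg : 0 < 4 * γ * (θ₀ ⬝ᵥ (A * A * NormedSpace.exp ((2 * l₀) • A)).mulVec θ₀)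
        + σ2 * (NormedSpace.exp ((-(2 * l₀)) • A) * Sig θ₀ * (A * A)).trace) :
    ∃ V : Set (Fin n → ℝ), IsOpen V ∧ θ₀ ∈ V ∧
      ∃ lam : (Fin n → ℝ) → ℝ, lam θ₀ = l₀ ∧ (∀ θ ∈ V, G θ (lam θ) = 0) ∧
        DifferentiableOn ℝ lam V := by
  open NormedSpace in
  have hF : ContDiff ℝ 1 (fun p : (Fin n → ℝ) × ℝ =>
      -4 * γ * (p.1 ⬝ᵥ (A * exp ((2 * p.2) • A)).mulVec p.1)
        + σ2 * (exp ((-(2 * p.2)) • A) * Sig p.1 * A).trace) :=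
    (contDiff_const.mul (quad_contDiff A A)).add
      (contDiff_const.mul (tr_contDiff A A Sig hSigC1))
  open NormedSpace in
  have hccont : Continuous (fun p : (Fin n → ℝ) × ℝ =>
      -2 * (4 * γ * (p.1 ⬝ᵥ (A * A * exp ((2 * p.2) • A)).mulVec p.1)
        + σ2 * (exp ((-(2 * p.2)) • A) * Sig p.1 * (A * A)).trace)) :=
    (contDiff_const.mul ((contDiff_const.mul (quad_contDiff A (A * A))).add
      (contDiff_const.mul (tr_contDiff A (A * A) Sig hSigC1)))).continuous
  open NormedSpace in
  have hz : -4 * γ * (θ₀ ⬝ᵥ (A * exp ((2 * l₀) • A)).mulVec θ₀)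
      + σ2 * (exp ((-(2 * l₀)) • A) * Sig θ₀ * A).trace = 0 := by
    rw [← hG]; exact hzero
  open NormedSpace in
  have hc0 : -2 * (4 * γ * (θ₀ ⬝ᵥ (A * A * exp ((2 * l₀) • A)).mulVec θ₀)
      + σ2 * (exp ((-(2 * l₀)) • A) * Sig θ₀ * (A * A)).trace) ≠ 0 := by
    intro h
    nlinarith [hnondeg]
  obtain ⟨V, hVopen, hV0, lam, hlam0, hlamz, hlamdiff⟩ :=
    aux_ift
      (fun p : (Fin n → ℝ) × ℝ =>
        -4 * γ * (p.1 ⬝ᵥ (A * NormedSpace.exp ((2 * p.2) • A)).mulVec p.1)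
          + σ2 * (NormedSpace.exp ((-(2 * p.2)) • A) * Sig p.1 * A).trace)
      (fun p : (Fin n → ℝ) × ℝ =>
        -2 * (4 * γ * (p.1 ⬝ᵥ (A * A * NormedSpace.exp ((2 * p.2) • A)).mulVec p.1)
          + σ2 * (NormedSpace.exp ((-(2 * p.2)) • A) * Sig p.1 * (A * A)).trace))
      hF (fun p => G_hasDerivAt A Sig γ σ2 p.1 p.2) hccont (θ₀, l₀) hz hc0
  exact ⟨V, hVopen, hV0, lam, hlam0, fun θ hθ => by rw [hG]; exact hlamz θ hθ, hlamdiff⟩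
end

section
/- Existence of a balanced factorization: let Σ_u ∈ ℝ^{d_y×d_y} and Σ_w ∈ ℝ^{d_x×d_x} be symmetric positive definite matrices, let V ∈ ℝ^{d_y×d_x}, and let d ≥ rank(V). Then there exist matrices U ∈ ℝ^{d_y×d} and W ∈ ℝ^{d×d_x} such that U W = V and W Σ_w W^⊤ = U^⊤ Σ_u U. -/
open Matrix

/-- Core lemma: any real matrix `B` of rank at most `d` factors as `B = U * W` with
`W * Wᵀ = Uᵀ * U`, via the spectral decomposition of `Bᵀ * B`. -/
theorem exists_balanced_factorization_aux {dx dy d : ℕ}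
    (B : Matrix (Fin dy) (Fin dx) ℝ) (hd : B.rank ≤ d) :
    ∃ (U : Matrix (Fin dy) (Fin d) ℝ) (W : Matrix (Fin d) (Fin dx) ℝ),
      U * W = B ∧ W * Wᵀ = Uᵀ * U := by
  classical
  have hM : (Bᵀ * B).PosSemidef := by
    have := Matrix.posSemidef_conjTranspose_mul_self B
    rwa [Matrix.conjTranspose_eq_transpose_of_trivial] at this
  set lam : Fin dx → ℝ := hM.1.eigenvalues with hlam
  have hlam_nonneg : ∀ i, 0 ≤ lam i := fun i => hM.eigenvalues_nonneg i
  set Q : Matrix (Fin dx) (Fin dx) ℝ := (hM.1.eigenvectorUnitary : Matrix (Fin dx) (Fin dx) ℝ)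
    with hQ
  have hstarQ : star Q = Qᵀ := by
    rw [Matrix.star_eq_conjTranspose, Matrix.conjTranspose_eq_transpose_of_trivial]
  have hQtQ : Qᵀ * Q = 1 := by
    rw [← hstarQ]; exact Matrix.mem_unitaryGroup_iff'.mp (hM.1.eigenvectorUnitary).2
  have hQQt : Q * Qᵀ = 1 := by
    rw [← hstarQ]; exact Matrix.mem_unitaryGroup_iff.mp (hM.1.eigenvectorUnitary).2
  have hdiag : Qᵀ * (Bᵀ * B) * Q = diagonal lam := by
    have := hM.1.conjStarAlgAut_star_eigenvectorUnitary
    rw [Unitary.conjStarAlgAut_star_apply, ← hQ] at this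
    rw [hstarQ] at this
    simpa [RCLike.ofReal_real_eq_id, Function.comp] using this
  -- number of nonzero eigenvalues is at most d
  have hcard : Fintype.card {i // lam i ≠ 0} ≤ d := by
    have h1 : (Bᵀ * B).rank = Fintype.card {i // lam i ≠ 0} :=
      hM.1.rank_eq_card_non_zero_eigs
    have h2 : (Bᵀ * B).rank = B.rank := Matrix.rank_transpose_mul_self B
    omega
  obtain ⟨ι⟩ : Nonempty ({i // lam i ≠ 0} ↪ Fin d) :=
    Function.Embedding.nonempty_of_card_le (by simpa using hcard)
  -- scaling functions
  set f : Fin dx → ℝ := fun i => Real.sqrt (Real.sqrt (lam i)) with hf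
  set g : Fin dx → ℝ := fun i => if lam i ≠ 0 then (f i)⁻¹ else 0 with hg
  set e : Fin dx → ℝ := fun i => if lam i ≠ 0 then (1 : ℝ) else 0 with he
  set P : Matrix (Fin dx) (Fin d) ℝ :=
    Matrix.of (fun i k => if h : lam i ≠ 0 then (if k = ι ⟨i, h⟩ then (1 : ℝ) else 0) else 0)
    with hP
  have hPPt : P * Pᵀ = diagonal e := by
    ext i j
    rw [Matrix.mul_apply, Matrix.diagonal_apply]
    by_cases hi : lam i ≠ 0
    · by_cases hij : i = j
      · subst hij
        simp [hP, hi, he, Matrix.transpose_apply, ite_and]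
      · rw [if_neg hij]
        apply Finset.sum_eq_zero
        intro k _
        rw [Matrix.transpose_apply]
        simp only [hP, Matrix.of_apply, dif_pos hi]
        by_cases hj : lam j ≠ 0
        · rw [dif_pos hj]
          by_cases hk : k = ι ⟨i, hi⟩
          · have : k ≠ ι ⟨j, hj⟩ := by
              intro hk2
              apply hij
              have : (⟨i, hi⟩ : {i // lam i ≠ 0}) = ⟨j, hj⟩ := ι.injective (hk ▸ hk2)
              exact congrArg Subtype.val this
            rw [if_neg this, mul_zero]
          · rw [if_neg hk, zero_mul]
        · rw [dif_neg hj, mul_zero]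
    · simp only [hP, Matrix.of_apply, dif_neg hi, Matrix.transpose_apply, zero_mul,
        Finset.sum_const_zero, he]
      by_cases hij : i = j
      · subst hij; rw [if_pos rfl, if_neg hi]
      · rw [if_neg hij]
  set C : Matrix (Fin dy) (Fin dx) ℝ := B * Q with hC
  have hCtC : Cᵀ * C = diagonal lam := by
    rw [hC, Matrix.transpose_mul]
    calc Qᵀ * Bᵀ * (B * Q) = Qᵀ * (Bᵀ * B) * Q := by
          simp only [Matrix.mul_assoc]
      _ = diagonal lam := hdiag
  have hCzero : ∀ i, lam i = 0 → ∀ x, C x i = 0 := by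
    intro i hi x
    have h0 : ∑ y, C y i * C y i = 0 := by
      have := congrFun (congrFun hCtC i) i
      rw [Matrix.mul_apply, Matrix.diagonal_apply_eq] at this
      simp only [Matrix.transpose_apply] at this
      rw [this, hi]
    have := (Finset.sum_eq_zero_iff_of_nonneg
      (fun y _ => mul_self_nonneg (C y i))).mp h0 x (Finset.mem_univ x)
    exact mul_self_eq_zero.mp this
  have hCe : C * diagonal e = C := by
    ext x i
    rw [Matrix.mul_diagonal]
    by_cases hi : lam i ≠ 0
    · rw [he]; simp [hi]
    · push_neg at hi
      rw [hCzero i hi x, zero_mul]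
  refine ⟨C * diagonal g * P, Pᵀ * diagonal f * Qᵀ, ?_, ?_⟩
  · -- U * W = B
    have key : C * diagonal g * P * (Pᵀ * diagonal f * Qᵀ)
        = C * (diagonal g * (P * Pᵀ) * diagonal f) * Qᵀ := by
      simp only [Matrix.mul_assoc]
    rw [key, hPPt, Matrix.diagonal_mul_diagonal, Matrix.diagonal_mul_diagonal]
    have hgef : (fun i => g i * e i * f i) = e := by
      funext i
      by_cases hi : lam i ≠ 0
      · have hfpos : 0 < f i := by
          rw [hf]
          exact Real.sqrt_pos.mpr (Real.sqrt_pos.mpr (lt_of_le_of_ne (hlam_nonneg i)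
            (Ne.symm hi)))
        simp only [hg, he, if_pos hi]
        field_simp
      · push_neg at hi
        simp [hg, he, hi]
    rw [hgef, hCe, hC, Matrix.mul_assoc, hQQt, Matrix.mul_one]
  · -- balance condition
    have hWWt : Pᵀ * diagonal f * Qᵀ * (Pᵀ * diagonal f * Qᵀ)ᵀ
        = Pᵀ * (diagonal f * (Qᵀ * Q) * diagonal f) * P := by
      simp only [Matrix.transpose_mul, Matrix.transpose_transpose, Matrix.diagonal_transpose,
        Matrix.mul_assoc]
    have hUtU : (C * diagonal g * P)ᵀ * (C * diagonal g * P)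
        = Pᵀ * (diagonal g * (Cᵀ * C) * diagonal g) * P := by
      simp only [Matrix.transpose_mul, Matrix.diagonal_transpose, Matrix.mul_assoc]
    rw [hWWt, hUtU, hQtQ, hCtC, Matrix.mul_one, Matrix.diagonal_mul_diagonal,
      Matrix.diagonal_mul_diagonal, Matrix.diagonal_mul_diagonal]
    have hdeq : (fun i => f i * f i) = fun i => g i * lam i * g i := by
      funext i
      by_cases hi : lam i ≠ 0
      · have hl : 0 < lam i := lt_of_le_of_ne (hlam_nonneg i) (Ne.symm hi)
        have hff : f i * f i = Real.sqrt (lam i) :=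
          Real.mul_self_sqrt (Real.sqrt_nonneg _)
        have hss : Real.sqrt (lam i) * Real.sqrt (lam i) = lam i :=
          Real.mul_self_sqrt (hlam_nonneg i)
        have hfpos : 0 < f i := Real.sqrt_pos.mpr (Real.sqrt_pos.mpr hl)
        simp only [hg, if_pos hi]
        rw [hff]
        field_simp
        nlinarith [hff, hss]
      · push_neg at hi
        simp [hg, hf, hi]
    rw [hdeq]

/-- Existence of a balanced factorization: for positive definite `Σ_u`, `Σ_w`, any matrix `V`
and any inner dimension `d ≥ rank(V)`, there is a factorization `V = UW` satisfying the
balance condition `W Σ_w Wᵀ = Uᵀ Σ_u U`. -/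
theorem exists_balanced_factorization {dx dy d : ℕ}
    (Su : Matrix (Fin dy) (Fin dy) ℝ) (hSu : Su.PosDef)
    (Sw : Matrix (Fin dx) (Fin dx) ℝ) (hSw : Sw.PosDef)
    (V : Matrix (Fin dy) (Fin dx) ℝ) (hd : V.rank ≤ d) :
    ∃ (U : Matrix (Fin dy) (Fin d) ℝ) (W : Matrix (Fin d) (Fin dx) ℝ),
      U * W = V ∧ W * Sw * Wᵀ = Uᵀ * Su * U := by
  classical
  open scoped MatrixOrder in set Ru := CFC.sqrt Su with hRu
  open scoped MatrixOrder in set Rw := CFC.sqrt Sw with hRw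
  open scoped MatrixOrder in have hRuRu : Ru * Ru = Su := CFC.sqrt_mul_sqrt_self Su hSu.posSemidef.nonneg
  open scoped MatrixOrder in have hRwRw : Rw * Rw = Sw := CFC.sqrt_mul_sqrt_self Sw hSw.posSemidef.nonneg
  have hRuT : Ruᵀ = Ru := by
    open scoped MatrixOrder in have := (CFC.sqrt_nonneg Su).posSemidef.1
    rwa [Matrix.IsHermitian, Matrix.conjTranspose_eq_transpose_of_trivial] at this
  have hRwT : Rwᵀ = Rw := by
    open scoped MatrixOrder in have := (CFC.sqrt_nonneg Sw).posSemidef.1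
    rwa [Matrix.IsHermitian, Matrix.conjTranspose_eq_transpose_of_trivial] at this
  have hRuUnit : IsUnit Ru.det := by
    have hne : Ru.det ≠ 0 := by
      intro h0
      apply hSu.det_pos.ne'
      rw [← hRuRu, Matrix.det_mul, h0, mul_zero]
    exact hne.isUnit
  have hRwUnit : IsUnit Rw.det := by
    have hne : Rw.det ≠ 0 := by
      intro h0
      apply hSw.det_pos.ne'
      rw [← hRwRw, Matrix.det_mul, h0, mul_zero]
    exact hne.isUnit
  set B := Ru * V * Rw with hB
  have hrank : B.rank ≤ d := by
    calc B.rank ≤ (Ru * V).rank := Matrix.rank_mul_le_left _ _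
      _ ≤ V.rank := Matrix.rank_mul_le_right _ _
      _ ≤ d := hd
  obtain ⟨U', W', hUW, hbal⟩ := exists_balanced_factorization_aux B hrank
  refine ⟨Ru⁻¹ * U', W' * Rw⁻¹, ?_, ?_⟩
  · calc Ru⁻¹ * U' * (W' * Rw⁻¹) = Ru⁻¹ * (U' * W') * Rw⁻¹ := by
          simp only [Matrix.mul_assoc]
      _ = Ru⁻¹ * (Ru * V * Rw) * Rw⁻¹ := by rw [hUW]
      _ = (Ru⁻¹ * Ru) * V * (Rw * Rw⁻¹) := by simp only [Matrix.mul_assoc]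
      _ = V := by
          rw [Matrix.nonsing_inv_mul _ hRuUnit, Matrix.mul_nonsing_inv _ hRwUnit,
            Matrix.one_mul, Matrix.mul_one]
  · have hinvT_w : (Rw⁻¹)ᵀ = Rw⁻¹ := by rw [Matrix.transpose_nonsing_inv, hRwT]
    have hinvT_u : (Ru⁻¹)ᵀ = Ru⁻¹ := by rw [Matrix.transpose_nonsing_inv, hRuT]
    have hmid_w : Rw⁻¹ * Sw * Rw⁻¹ = 1 := by
      rw [← hRwRw, ← Matrix.mul_assoc Rw⁻¹ Rw Rw, Matrix.nonsing_inv_mul _ hRwUnit,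
        Matrix.one_mul, Matrix.mul_nonsing_inv _ hRwUnit]
    have hmid_u : Ru⁻¹ * Su * Ru⁻¹ = 1 := by
      rw [← hRuRu, ← Matrix.mul_assoc Ru⁻¹ Ru Ru, Matrix.nonsing_inv_mul _ hRuUnit,
        Matrix.one_mul, Matrix.mul_nonsing_inv _ hRuUnit]
    calc W' * Rw⁻¹ * Sw * (W' * Rw⁻¹)ᵀ
        = W' * (Rw⁻¹ * Sw * Rw⁻¹) * W'ᵀ := by
          rw [Matrix.transpose_mul, hinvT_w]; simp only [Matrix.mul_assoc]
      _ = W' * W'ᵀ := by rw [hmid_w, Matrix.mul_one]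
      _ = U'ᵀ * U' := hbal
      _ = U'ᵀ * (Ru⁻¹ * Su * Ru⁻¹) * U' := by rw [hmid_u, Matrix.mul_one]
      _ = (Ru⁻¹ * U')ᵀ * Su * (Ru⁻¹ * U') := by
          rw [Matrix.transpose_mul, hinvT_u]; simp only [Matrix.mul_assoc]
end

section
/- Hessian trace of the two-layer linear network loss (Proposition 5.2): let Z be a finite dataset of pairs (x_z, y_z) ∈ ℝ^{d_x} × ℝ^{d_y}, let L(U, W) = E[‖U W x − y‖²] for U ∈ ℝ^{d_y×d}, W ∈ ℝ^{d×d_x}, viewed as a function of the d_y·d + d·d_x parameters (U, W), and let Σ_x = E[x x^⊤]. Then the trace of the Hessian of L with respect to all parameters equals 2 ( d_y Tr[W Σ_x W^⊤] + ‖U‖_F² Tr[Σ_x] ). -/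
open Matrix

section aux
variable {dx dy d : ℕ}

local notation "Idx" => ((Fin dy × Fin d) ⊕ (Fin d × Fin dx))

noncomputable def DfCLM (dx dy d : ℕ) (xv : Fin dx → ℝ) (i : Fin dy)
    (v : ((Fin dy × Fin d) ⊕ (Fin d × Fin dx)) → ℝ) :
    (((Fin dy × Fin d) ⊕ (Fin d × Fin dx)) → ℝ) →L[ℝ] ℝ :=
  ∑ a : Fin d,
    (v (Sum.inl (i, a)) • ∑ j : Fin dx, xv j • ContinuousLinearMap.proj (Sum.inr (a, j))
      + (∑ j : Fin dx, v (Sum.inr (a, j)) * xv j) • ContinuousLinearMap.proj (Sum.inl (i, a)))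

lemma hasFDerivAt_coord (p : Idx) (v : Idx → ℝ) :
    HasFDerivAt (fun θ : Idx → ℝ => θ p)
      (ContinuousLinearMap.proj (R := ℝ) (φ := fun _ : Idx => ℝ) p) v :=
  (ContinuousLinearMap.proj (R := ℝ) (φ := fun _ : Idx => ℝ) p).hasFDerivAt

lemma hasFDerivAt_f (xv : Fin dx → ℝ) (yv : ℝ) (i : Fin dy) (v : Idx → ℝ) :
    HasFDerivAt (fun θ : Idx → ℝ =>
        (∑ a : Fin d, θ (Sum.inl (i, a)) * ∑ j : Fin dx, θ (Sum.inr (a, j)) * xv j) - yv)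
      (DfCLM dx dy d xv i v) v := by
  apply HasFDerivAt.sub_const
  exact HasFDerivAt.fun_sum fun a _ =>
    (hasFDerivAt_coord _ v).fun_mul (HasFDerivAt.fun_sum fun j _ =>
      (hasFDerivAt_coord _ v).mul_const (xv j))

lemma DfCLM_apply_inl (xv : Fin dx → ℝ) (i i₀ : Fin dy) (a₀ : Fin d) (v : Idx → ℝ) :
    DfCLM dx dy d xv i v (Pi.single (Sum.inl (i₀, a₀)) 1)
      = if i = i₀ then ∑ j : Fin dx, v (Sum.inr (a₀, j)) * xv j else 0 := by
  simp only [DfCLM, ContinuousLinearMap.sum_apply, ContinuousLinearMap.add_apply,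
    ContinuousLinearMap.smul_apply, ContinuousLinearMap.proj_apply, Pi.single_apply]
  by_cases h : i = i₀ <;> simp [h, Prod.ext_iff, ite_and, Finset.sum_ite_eq', mul_comm]

lemma DfCLM_apply_inr (xv : Fin dx → ℝ) (i : Fin dy) (a₀ : Fin d) (j₀ : Fin dx) (v : Idx → ℝ) :
    DfCLM dx dy d xv i v (Pi.single (Sum.inr (a₀, j₀)) 1)
      = v (Sum.inl (i, a₀)) * xv j₀ := by
  simp only [DfCLM, ContinuousLinearMap.sum_apply, ContinuousLinearMap.add_apply,
    ContinuousLinearMap.smul_apply, ContinuousLinearMap.proj_apply, Pi.single_apply]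
  simp [Prod.ext_iff, ite_and, Finset.sum_ite_eq', mul_comm]

variable {Z : Type*} [Fintype Z]

noncomputable def DLCLM (dx dy d : ℕ) (x : Z → Fin dx → ℝ) (y : Z → Fin dy → ℝ)
    (v : ((Fin dy × Fin d) ⊕ (Fin d × Fin dx)) → ℝ) :
    (((Fin dy × Fin d) ⊕ (Fin d × Fin dx)) → ℝ) →L[ℝ] ℝ :=
  (Fintype.card Z : ℝ)⁻¹ • ∑ z : Z, ∑ i : Fin dy,
    (((∑ a : Fin d, v (Sum.inl (i, a)) * ∑ j : Fin dx, v (Sum.inr (a, j)) * x z j) - y z i)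
        • DfCLM dx dy d (x z) i v
      + ((∑ a : Fin d, v (Sum.inl (i, a)) * ∑ j : Fin dx, v (Sum.inr (a, j)) * x z j) - y z i)
        • DfCLM dx dy d (x z) i v)

lemma hasFDerivAt_L (x : Z → Fin dx → ℝ) (y : Z → Fin dy → ℝ)
    (L : (Idx → ℝ) → ℝ)
    (hL : ∀ θ : Idx → ℝ,
      L θ = (Fintype.card Z : ℝ)⁻¹ * ∑ z : Z, ∑ i : Fin dy,
        ((∑ a : Fin d, θ (Sum.inl (i, a)) * ∑ j : Fin dx, θ (Sum.inr (a, j)) * x z j)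
          - y z i) ^ 2)
    (v : Idx → ℝ) : HasFDerivAt L (DLCLM dx dy d x y v) v := by
  have hLeq : L = fun θ : Idx → ℝ => (Fintype.card Z : ℝ)⁻¹ * ∑ z : Z, ∑ i : Fin dy,
      (((∑ a : Fin d, θ (Sum.inl (i, a)) * ∑ j : Fin dx, θ (Sum.inr (a, j)) * x z j) - y z i) *
       ((∑ a : Fin d, θ (Sum.inl (i, a)) * ∑ j : Fin dx, θ (Sum.inr (a, j)) * x z j) - y z i)) := by
    funext θ; rw [hL]; congr 1; refine Finset.sum_congr rfl fun z _ => Finset.sum_congr rfl fun i _ => ?_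
    ring
  rw [hLeq]
  exact HasFDerivAt.const_mul (HasFDerivAt.fun_sum fun z _ => HasFDerivAt.fun_sum fun i _ =>
    (hasFDerivAt_f (x z) (y z i) i v).fun_mul (hasFDerivAt_f (x z) (y z i) i v)) _

lemma DL_apply_inl (x : Z → Fin dx → ℝ) (y : Z → Fin dy → ℝ) (i₀ : Fin dy) (a₀ : Fin d)
    (v : Idx → ℝ) :
    DLCLM dx dy d x y v (Pi.single (Sum.inl (i₀, a₀)) 1)
      = (Fintype.card Z : ℝ)⁻¹ * ∑ z : Z,
        (((∑ a : Fin d, v (Sum.inl (i₀, a)) * ∑ j : Fin dx, v (Sum.inr (a, j)) * x z j) - y z i₀)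
            * (∑ j : Fin dx, v (Sum.inr (a₀, j)) * x z j)
          + ((∑ a : Fin d, v (Sum.inl (i₀, a)) * ∑ j : Fin dx, v (Sum.inr (a, j)) * x z j) - y z i₀)
            * (∑ j : Fin dx, v (Sum.inr (a₀, j)) * x z j)) := by
  simp [DLCLM, ContinuousLinearMap.sum_apply, DfCLM_apply_inl, mul_ite, Finset.sum_add_distrib, Finset.sum_ite_eq', mul_add]

lemma DL_apply_inr (x : Z → Fin dx → ℝ) (y : Z → Fin dy → ℝ) (a₀ : Fin d) (j₀ : Fin dx)
    (v : Idx → ℝ) :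
    DLCLM dx dy d x y v (Pi.single (Sum.inr (a₀, j₀)) 1)
      = (Fintype.card Z : ℝ)⁻¹ * ∑ z : Z, ∑ i : Fin dy,
        (((∑ a : Fin d, v (Sum.inl (i, a)) * ∑ j : Fin dx, v (Sum.inr (a, j)) * x z j) - y z i)
            * (v (Sum.inl (i, a₀)) * x z j₀)
          + ((∑ a : Fin d, v (Sum.inl (i, a)) * ∑ j : Fin dx, v (Sum.inr (a, j)) * x z j) - y z i)
            * (v (Sum.inl (i, a₀)) * x z j₀)) := by
  simp [DLCLM, ContinuousLinearMap.sum_apply, DfCLM_apply_inr, mul_add, Finset.sum_add_distrib]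


lemma second_inl (x : Z → Fin dx → ℝ) (y : Z → Fin dy → ℝ)
    (L : (Idx → ℝ) → ℝ)
    (hL : ∀ θ : Idx → ℝ,
      L θ = (Fintype.card Z : ℝ)⁻¹ * ∑ z : Z, ∑ i : Fin dy,
        ((∑ a : Fin d, θ (Sum.inl (i, a)) * ∑ j : Fin dx, θ (Sum.inr (a, j)) * x z j)
          - y z i) ^ 2)
    (i₀ : Fin dy) (a₀ : Fin d) (θ₀ : Idx → ℝ) :
    fderiv ℝ (fun v => fderiv ℝ L v (Pi.single (Sum.inl (i₀, a₀)) 1)) θ₀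
        (Pi.single (Sum.inl (i₀, a₀)) 1)
      = (Fintype.card Z : ℝ)⁻¹ * ∑ z : Z,
          2 * (∑ j : Fin dx, θ₀ (Sum.inr (a₀, j)) * x z j) ^ 2 := by
  have hfun : (fun v => fderiv ℝ L v (Pi.single (Sum.inl (i₀, a₀)) 1))
      = fun v : Idx → ℝ => (Fintype.card Z : ℝ)⁻¹ * ∑ z : Z,
        (((∑ a : Fin d, v (Sum.inl (i₀, a)) * ∑ j : Fin dx, v (Sum.inr (a, j)) * x z j) - y z i₀)
            * (∑ j : Fin dx, v (Sum.inr (a₀, j)) * x z j)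
          + ((∑ a : Fin d, v (Sum.inl (i₀, a)) * ∑ j : Fin dx, v (Sum.inr (a, j)) * x z j) - y z i₀)
            * (∑ j : Fin dx, v (Sum.inr (a₀, j)) * x z j)) := by
    funext v
    rw [(hasFDerivAt_L x y L hL v).fderiv, DL_apply_inl]
  rw [hfun]
  have hG := HasFDerivAt.const_mul (HasFDerivAt.fun_sum fun z (_ : z ∈ Finset.univ) =>
      HasFDerivAt.fun_add
        ((hasFDerivAt_f (x z) (y z i₀) i₀ θ₀).fun_mul (HasFDerivAt.fun_sum fun j (_ : j ∈ Finset.univ) =>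
          (hasFDerivAt_coord (Sum.inr (a₀, j)) θ₀).mul_const (x z j)))
        ((hasFDerivAt_f (x z) (y z i₀) i₀ θ₀).fun_mul (HasFDerivAt.fun_sum fun j (_ : j ∈ Finset.univ) =>
          (hasFDerivAt_coord (Sum.inr (a₀, j)) θ₀).mul_const (x z j))))
      ((Fintype.card Z : ℝ)⁻¹)
  rw [hG.fderiv]
  simp only [ContinuousLinearMap.smul_apply, ContinuousLinearMap.sum_apply,
    ContinuousLinearMap.add_apply, ContinuousLinearMap.proj_apply, DfCLM_apply_inl,
    Pi.single_apply, smul_eq_mul]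
  congr 1
  refine Finset.sum_congr rfl fun z _ => ?_
  simp
  ring

lemma second_inr (x : Z → Fin dx → ℝ) (y : Z → Fin dy → ℝ)
    (L : (Idx → ℝ) → ℝ)
    (hL : ∀ θ : Idx → ℝ,
      L θ = (Fintype.card Z : ℝ)⁻¹ * ∑ z : Z, ∑ i : Fin dy,
        ((∑ a : Fin d, θ (Sum.inl (i, a)) * ∑ j : Fin dx, θ (Sum.inr (a, j)) * x z j)
          - y z i) ^ 2)
    (a₀ : Fin d) (j₀ : Fin dx) (θ₀ : Idx → ℝ) :
    fderiv ℝ (fun v => fderiv ℝ L v (Pi.single (Sum.inr (a₀, j₀)) 1)) θ₀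
        (Pi.single (Sum.inr (a₀, j₀)) 1)
      = (Fintype.card Z : ℝ)⁻¹ * ∑ z : Z, ∑ i : Fin dy,
          2 * (θ₀ (Sum.inl (i, a₀)) * x z j₀) ^ 2 := by
  have hfun : (fun v => fderiv ℝ L v (Pi.single (Sum.inr (a₀, j₀)) 1))
      = fun v : Idx → ℝ => (Fintype.card Z : ℝ)⁻¹ * ∑ z : Z, ∑ i : Fin dy,
        (((∑ a : Fin d, v (Sum.inl (i, a)) * ∑ j : Fin dx, v (Sum.inr (a, j)) * x z j) - y z i)
            * (v (Sum.inl (i, a₀)) * x z j₀)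
          + ((∑ a : Fin d, v (Sum.inl (i, a)) * ∑ j : Fin dx, v (Sum.inr (a, j)) * x z j) - y z i)
            * (v (Sum.inl (i, a₀)) * x z j₀)) := by
    funext v
    rw [(hasFDerivAt_L x y L hL v).fderiv, DL_apply_inr]
  rw [hfun]
  have hG := HasFDerivAt.const_mul (HasFDerivAt.fun_sum fun z (_ : z ∈ Finset.univ) =>
      HasFDerivAt.fun_sum fun i (_ : i ∈ Finset.univ) => HasFDerivAt.fun_add
        ((hasFDerivAt_f (x z) (y z i) i θ₀).fun_mul
          ((hasFDerivAt_coord (Sum.inl (i, a₀)) θ₀).mul_const (x z j₀)))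
        ((hasFDerivAt_f (x z) (y z i) i θ₀).fun_mul
          ((hasFDerivAt_coord (Sum.inl (i, a₀)) θ₀).mul_const (x z j₀))))
      ((Fintype.card Z : ℝ)⁻¹)
  rw [hG.fderiv]
  simp only [ContinuousLinearMap.smul_apply, ContinuousLinearMap.sum_apply,
    ContinuousLinearMap.add_apply, ContinuousLinearMap.proj_apply, DfCLM_apply_inr,
    Pi.single_apply, smul_eq_mul]
  congr 1
  refine Finset.sum_congr rfl fun z _ => Finset.sum_congr rfl fun i _ => ?_
  simp
  ring

end aux

/-- Hessian trace of the two-layer linear network loss (Proposition 5.2): for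
`L(U,W) = E[‖UWx − y‖²]` viewed as a function of the vectorized parameters `(U, W)`,
the trace of the Hessian equals `2(d_y Tr[WΣ_xWᵀ] + ‖U‖_F² Tr[Σ_x])`, where `Σ_x = E[xxᵀ]`. -/
theorem two_layer_hessian_trace {dx dy d : ℕ} {Z : Type*} [Fintype Z] [Nonempty Z]
    (x : Z → Fin dx → ℝ) (y : Z → Fin dy → ℝ)
    (U : Fin dy → Fin d → ℝ) (W : Fin d → Fin dx → ℝ)
    (L : (((Fin dy × Fin d) ⊕ (Fin d × Fin dx)) → ℝ) → ℝ)
    (hL : ∀ θ : ((Fin dy × Fin d) ⊕ (Fin d × Fin dx)) → ℝ,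
      L θ = (Fintype.card Z : ℝ)⁻¹ * ∑ z : Z, ∑ i : Fin dy,
        ((∑ a : Fin d, θ (Sum.inl (i, a)) * ∑ j : Fin dx, θ (Sum.inr (a, j)) * x z j)
          - y z i) ^ 2)
    (θ₀ : ((Fin dy × Fin d) ⊕ (Fin d × Fin dx)) → ℝ)
    (hθ₀ : θ₀ = Sum.elim (fun p => U p.1 p.2) (fun p => W p.1 p.2))
    (Sx : Matrix (Fin dx) (Fin dx) ℝ)
    (hSx : Sx = Matrix.of fun a b => (Fintype.card Z : ℝ)⁻¹ * ∑ z : Z, x z a * x z b) :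
    ∑ p : (Fin dy × Fin d) ⊕ (Fin d × Fin dx),
        fderiv ℝ (fun v => fderiv ℝ L v (Pi.single p 1)) θ₀ (Pi.single p 1)
      = 2 * ((dy : ℝ) * (Matrix.of W * Sx * (Matrix.of W)ᵀ).trace
          + (∑ i, ∑ a, (U i a) ^ 2) * Sx.trace) := by
  set c : ℝ := (Fintype.card Z : ℝ)⁻¹ with hc
  rw [Fintype.sum_sum_type]
  have h1 : (∑ p : Fin dy × Fin d,
        fderiv ℝ (fun v => fderiv ℝ L v (Pi.single (Sum.inl p) 1)) θ₀ (Pi.single (Sum.inl p) 1))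
      = ∑ p : Fin dy × Fin d, c * ∑ z : Z, 2 * (∑ j : Fin dx, W p.2 j * x z j) ^ 2 := by
    refine Finset.sum_congr rfl fun p _ => ?_
    obtain ⟨i₀, a₀⟩ := p
    rw [second_inl x y L hL i₀ a₀ θ₀]
    simp [hθ₀, hc]
  have h2 : (∑ q : Fin d × Fin dx,
        fderiv ℝ (fun v => fderiv ℝ L v (Pi.single (Sum.inr q) 1)) θ₀ (Pi.single (Sum.inr q) 1))
      = ∑ q : Fin d × Fin dx, c * ∑ z : Z, ∑ i : Fin dy, 2 * (U i q.1 * x z q.2) ^ 2 := by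
    refine Finset.sum_congr rfl fun q _ => ?_
    obtain ⟨a₀, j₀⟩ := q
    rw [second_inr x y L hL a₀ j₀ θ₀]
    simp [hθ₀, hc]
  rw [h1, h2, Fintype.sum_prod_type, Fintype.sum_prod_type]
  -- first piece: sum over i₀ is constant
  have hconst : (∑ i₀ : Fin dy, ∑ a₀ : Fin d, c * ∑ z : Z, 2 * (∑ j : Fin dx, W a₀ j * x z j) ^ 2)
      = (dy : ℝ) * ∑ a₀ : Fin d, c * ∑ z : Z, 2 * (∑ j : Fin dx, W a₀ j * x z j) ^ 2 := by
    rw [Finset.sum_const, Finset.card_univ, Fintype.card_fin, nsmul_eq_mul]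
  rw [hconst]
  -- key scalar identity for the trace term
  have inner : ∀ a : Fin d,
      (∑ k : Fin dx, (∑ b : Fin dx, W a b * (c * ∑ z : Z, x z b * x z k)) * W a k)
        = c * ∑ z : Z, (∑ j : Fin dx, W a j * x z j) ^ 2 := by
    intro a
    calc ∑ k : Fin dx, (∑ b : Fin dx, W a b * (c * ∑ z : Z, x z b * x z k)) * W a k
        = ∑ k : Fin dx, ∑ b : Fin dx, ∑ z : Z,
            c * ((W a b * x z b) * (W a k * x z k)) := by
          refine Finset.sum_congr rfl fun k _ => ?_
          rw [Finset.sum_mul]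
          refine Finset.sum_congr rfl fun b _ => ?_
          calc (W a b * (c * ∑ z : Z, x z b * x z k)) * W a k
              = (W a b * c * W a k) * ∑ z : Z, x z b * x z k := by ring
            _ = ∑ z : Z, (W a b * c * W a k) * (x z b * x z k) := Finset.mul_sum _ _ _
            _ = ∑ z : Z, c * ((W a b * x z b) * (W a k * x z k)) :=
                Finset.sum_congr rfl fun z _ => by ring
      _ = ∑ k : Fin dx, ∑ z : Z, ∑ b : Fin dx,
            c * ((W a b * x z b) * (W a k * x z k)) :=
          Finset.sum_congr rfl fun k _ => Finset.sum_comm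
      _ = ∑ z : Z, ∑ k : Fin dx, ∑ b : Fin dx,
            c * ((W a b * x z b) * (W a k * x z k)) := Finset.sum_comm
      _ = ∑ z : Z, c * (∑ j : Fin dx, W a j * x z j) ^ 2 := by
          refine Finset.sum_congr rfl fun z _ => ?_
          rw [pow_two, Finset.sum_mul_sum, Finset.mul_sum]
          refine Finset.sum_congr rfl fun k _ => ?_
          rw [Finset.mul_sum]
          refine Finset.sum_congr rfl fun b _ => ?_
          ring
      _ = c * ∑ z : Z, (∑ j : Fin dx, W a j * x z j) ^ 2 := (Finset.mul_sum _ _ _).symm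
  have htr : (Matrix.of W * Sx * (Matrix.of W)ᵀ).trace
      = ∑ a : Fin d, ∑ k : Fin dx, (∑ b : Fin dx, W a b * (c * ∑ z : Z, x z b * x z k)) * W a k := by
    rw [hSx]
    simp only [Matrix.trace, Matrix.mul_apply, Matrix.diag_apply, Matrix.transpose_apply,
      Matrix.of_apply]
  have hA : (∑ a₀ : Fin d, c * ∑ z : Z, 2 * (∑ j : Fin dx, W a₀ j * x z j) ^ 2)
      = 2 * (Matrix.of W * Sx * (Matrix.of W)ᵀ).trace := by
    rw [htr]
    rw [Finset.mul_sum]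
    refine Finset.sum_congr rfl fun a _ => ?_
    rw [inner a, Finset.mul_sum, Finset.mul_sum, Finset.mul_sum]
    exact Finset.sum_congr rfl fun z _ => by ring
  -- second piece
  have htr2 : Sx.trace = ∑ j : Fin dx, c * ∑ z : Z, x z j * x z j := by
    rw [hSx]; simp [Matrix.trace, Matrix.diag]
  have hB : (∑ a₀ : Fin d, ∑ j₀ : Fin dx, c * ∑ z : Z, ∑ i : Fin dy, 2 * (U i a₀ * x z j₀) ^ 2)
      = 2 * ((∑ i, ∑ a, (U i a) ^ 2) * Sx.trace) := by
    rw [htr2]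
    calc ∑ a₀ : Fin d, ∑ j₀ : Fin dx, c * ∑ z : Z, ∑ i : Fin dy, 2 * (U i a₀ * x z j₀) ^ 2
        = ∑ a₀ : Fin d, ∑ i : Fin dy, ∑ j₀ : Fin dx, ∑ z : Z,
            2 * c * (U i a₀ ^ 2 * (x z j₀ * x z j₀)) := by
          refine Finset.sum_congr rfl fun a₀ _ => ?_
          calc ∑ j₀ : Fin dx, c * ∑ z : Z, ∑ i : Fin dy, 2 * (U i a₀ * x z j₀) ^ 2
              = ∑ j₀ : Fin dx, ∑ z : Z, ∑ i : Fin dy, 2 * c * (U i a₀ ^ 2 * (x z j₀ * x z j₀)) := by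
                refine Finset.sum_congr rfl fun j₀ _ => ?_
                rw [Finset.mul_sum]
                refine Finset.sum_congr rfl fun z _ => ?_
                rw [Finset.mul_sum]
                exact Finset.sum_congr rfl fun i _ => by ring
            _ = ∑ j₀ : Fin dx, ∑ i : Fin dy, ∑ z : Z, 2 * c * (U i a₀ ^ 2 * (x z j₀ * x z j₀)) :=
                Finset.sum_congr rfl fun j₀ _ => Finset.sum_comm
            _ = ∑ i : Fin dy, ∑ j₀ : Fin dx, ∑ z : Z, 2 * c * (U i a₀ ^ 2 * (x z j₀ * x z j₀)) :=
                Finset.sum_comm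
      _ = ∑ i : Fin dy, ∑ a₀ : Fin d, ∑ j₀ : Fin dx, ∑ z : Z,
            2 * c * (U i a₀ ^ 2 * (x z j₀ * x z j₀)) := Finset.sum_comm
      _ = ∑ i : Fin dy, ∑ a₀ : Fin d, ∑ j₀ : Fin dx,
            2 * (U i a₀ ^ 2 * (c * ∑ z : Z, x z j₀ * x z j₀)) := by
          refine Finset.sum_congr rfl fun i _ => Finset.sum_congr rfl fun a _ =>
            Finset.sum_congr rfl fun j _ => ?_
          calc ∑ z : Z, 2 * c * (U i a ^ 2 * (x z j * x z j))
              = ∑ z : Z, (2 * U i a ^ 2 * c) * (x z j * x z j) :=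
                Finset.sum_congr rfl fun z _ => by ring
            _ = (2 * U i a ^ 2 * c) * ∑ z : Z, x z j * x z j := (Finset.mul_sum _ _ _).symm
            _ = 2 * (U i a ^ 2 * (c * ∑ z : Z, x z j * x z j)) := by ring
      _ = 2 * ((∑ i, ∑ a, (U i a) ^ 2) * ∑ j : Fin dx, c * ∑ z : Z, x z j * x z j) := by
          rw [Finset.sum_mul, Finset.mul_sum]
          refine Finset.sum_congr rfl fun i _ => ?_
          rw [Finset.sum_mul, Finset.mul_sum]
          refine Finset.sum_congr rfl fun a _ => ?_
          calc ∑ j : Fin dx, 2 * (U i a ^ 2 * (c * ∑ z : Z, x z j * x z j))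
              = ∑ j : Fin dx, (2 * U i a ^ 2) * (c * ∑ z : Z, x z j * x z j) :=
                Finset.sum_congr rfl fun j _ => by ring
            _ = (2 * U i a ^ 2) * ∑ j : Fin dx, c * ∑ z : Z, x z j * x z j :=
                (Finset.mul_sum _ _ _).symm
            _ = 2 * (U i a ^ 2 * ∑ j : Fin dx, c * ∑ z : Z, x z j * x z j) := by ring
  rw [hA, hB]
  ring
end

section
/- Exponential decay of the imbalance for rank-one matrix factorization: let Z be a finite dataset of scalar pairs (x_z, y_z) ∈ ℝ × ℝ, let u, w ∈ ℝ^d, and for each z set ℓ_z = (⟨u, w⟩ x_z − y_z)² and r_z = ⟨u, w⟩ x_z − y_z. Define the gradient covariances Σ_u = E[∇_u ℓ (∇_u ℓ)^⊤] − E[∇_u ℓ] E[∇_u ℓ]^⊤ and Σ_w = E[∇_w ℓ (∇_w ℓ)^⊤] − E[∇_w ℓ] E[∇_w ℓ]^⊤, and Var[r x] = E[(r x)²] − (E[r x])². Then Σ_u = 4 Var[r x] · w w^⊤ and Σ_w = 4 Var[r x] · u u^⊤, and for every symmetric B ∈ ℝ^{d×d}: Tr[Σ_u B] − Tr[Σ_w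 B] = −4 Var[r x] · (u^⊤ B u − w^⊤ B w). -/
open Matrix

lemma fderiv_aux {d : ℕ} (w : Fin d → ℝ) (x y : ℝ) (u : Fin d → ℝ) (a : Fin d) :
    fderiv ℝ (fun u' : Fin d → ℝ => ((∑ i, u' i * w i) * x - y) ^ 2) u (Pi.single a 1)
      = 2 * ((∑ i, u i * w i) * x - y) * x * w a := by
  set L : (Fin d → ℝ) →L[ℝ] ℝ := ∑ i, (w i) • (ContinuousLinearMap.proj i) with hL
  have hLapp : ∀ v : Fin d → ℝ, L v = ∑ i, v i * w i := by
    intro v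
    simp [hL, ContinuousLinearMap.sum_apply, mul_comm]
  have hg : HasDerivAt (fun t : ℝ => (t * x - y) ^ 2)
      (2 * ((L u) * x - y) * x) (L u) := by
    have := (((hasDerivAt_id (L u)).mul_const x).sub_const y).pow 2
    exact this.congr_deriv (by simp only [id_eq]; ring)
  have hf : HasFDerivAt (fun u' : Fin d → ℝ => ((L u') * x - y) ^ 2)
      ((2 * ((L u) * x - y) * x) • (L : (Fin d → ℝ) →L[ℝ] ℝ)) u :=
    hg.comp_hasFDerivAt u (L.hasFDerivAt)
  have heq : (fun u' : Fin d → ℝ => ((∑ i, u' i * w i) * x - y) ^ 2)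
      = fun u' => ((L u') * x - y) ^ 2 := by
    funext v; rw [hLapp]
  rw [heq, hf.fderiv]
  have : L (Pi.single a 1) = w a := by
    rw [hLapp]
    simp [Pi.single_apply, Finset.sum_ite_eq']
  simp [this, hLapp]

/-- Exponential decay of the imbalance for rank-one matrix factorization: for
`ℓ_z = (⟨u,w⟩x_z − y_z)²` with per-sample gradient covariances `Σ_u`, `Σ_w` and
`Var[rx] = E[(rx)²] − (E[rx])²`, one has `Σ_u = 4Var[rx]·wwᵀ`, `Σ_w = 4Var[rx]·uuᵀ`, and for
every symmetric `B`, `Tr[Σ_uB] − Tr[Σ_wB] = −4Var[rx]·(uᵀBu − wᵀBw)`. -/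
theorem rank_one_imbalance_decay {d : ℕ} {Z : Type*} [Fintype Z] [Nonempty Z]
    (x y : Z → ℝ) (u w : Fin d → ℝ)
    (r : Z → ℝ) (hr : ∀ z, r z = (∑ i, u i * w i) * x z - y z)
    (gu gw : Z → Fin d → ℝ)
    (hgu : ∀ (z : Z) (a : Fin d), gu z a
      = fderiv ℝ (fun u' : Fin d → ℝ => ((∑ i, u' i * w i) * x z - y z) ^ 2) u (Pi.single a 1))
    (hgw : ∀ (z : Z) (a : Fin d), gw z a
      = fderiv ℝ (fun w' : Fin d → ℝ => ((∑ i, u i * w' i) * x z - y z) ^ 2) w (Pi.single a 1))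
    (Su Sw : Matrix (Fin d) (Fin d) ℝ)
    (hSu : Su = Matrix.of fun a b =>
      (Fintype.card Z : ℝ)⁻¹ * ∑ z : Z, gu z a * gu z b
        - ((Fintype.card Z : ℝ)⁻¹ * ∑ z : Z, gu z a)
          * ((Fintype.card Z : ℝ)⁻¹ * ∑ z : Z, gu z b))
    (hSw : Sw = Matrix.of fun a b =>
      (Fintype.card Z : ℝ)⁻¹ * ∑ z : Z, gw z a * gw z b
        - ((Fintype.card Z : ℝ)⁻¹ * ∑ z : Z, gw z a)
          * ((Fintype.card Z : ℝ)⁻¹ * ∑ z : Z, gw z b))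
    (VarRx : ℝ)
    (hVar : VarRx = (Fintype.card Z : ℝ)⁻¹ * ∑ z : Z, (r z * x z) ^ 2
        - ((Fintype.card Z : ℝ)⁻¹ * ∑ z : Z, r z * x z) ^ 2) :
    Su = (4 * VarRx) • Matrix.of (fun a b => w a * w b)
      ∧ Sw = (4 * VarRx) • Matrix.of (fun a b => u a * u b)
      ∧ ∀ B : Matrix (Fin d) (Fin d) ℝ, B.IsSymm →
          (Su * B).trace - (Sw * B).trace
            = -4 * VarRx * (u ⬝ᵥ B.mulVec u - w ⬝ᵥ B.mulVec w) := by
  have hgu' : ∀ z a, gu z a = 2 * r z * x z * w a := by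
    intro z a
    rw [hgu, fderiv_aux, hr]
  have hgw' : ∀ z a, gw z a = 2 * r z * x z * u a := by
    intro z a
    rw [hgw]
    have hsum : ∀ v : Fin d → ℝ, (∑ i, u i * v i) = ∑ i, v i * u i :=
      fun v => Finset.sum_congr rfl fun i _ => mul_comm _ _
    have heq : (fun w' : Fin d → ℝ => ((∑ i, u i * w' i) * x z - y z) ^ 2)
        = fun w' : Fin d → ℝ => ((∑ i, w' i * u i) * x z - y z) ^ 2 := by
      funext v; rw [hsum v]
    rw [heq, fderiv_aux, hr, hsum w]
  set c : ℝ := (Fintype.card Z : ℝ)⁻¹ with hc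
  have key : ∀ v : Fin d → ℝ, ∀ a b : Fin d,
      c * (∑ z : Z, (2 * r z * x z * v a) * (2 * r z * x z * v b))
        - (c * ∑ z : Z, 2 * r z * x z * v a) * (c * ∑ z : Z, 2 * r z * x z * v b)
      = (4 * VarRx) * (v a * v b) := by
    intro v a b
    have e1 : (∑ z : Z, (2 * r z * x z * v a) * (2 * r z * x z * v b))
        = (4 * v a * v b) * ∑ z : Z, (r z * x z) ^ 2 := by
      rw [Finset.mul_sum]; exact Finset.sum_congr rfl fun z _ => by ring
    have e2 : ∀ aa : Fin d, (∑ z : Z, 2 * r z * x z * v aa)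
        = (2 * v aa) * ∑ z : Z, r z * x z := by
      intro aa; rw [Finset.mul_sum]; exact Finset.sum_congr rfl fun z _ => by ring
    rw [e1, e2, e2, hVar]
    ring
  have h1 : Su = (4 * VarRx) • Matrix.of (fun a b => w a * w b) := by
    rw [hSu]; ext a b
    simp only [Matrix.of_apply, Matrix.smul_apply, smul_eq_mul]
    simp only [hgu']
    exact key w a b
  have h2 : Sw = (4 * VarRx) • Matrix.of (fun a b => u a * u b) := by
    rw [hSw]; ext a b
    simp only [Matrix.of_apply, Matrix.smul_apply, smul_eq_mul]
    simp only [hgw']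
    exact key u a b
  refine ⟨h1, h2, ?_⟩
  intro B hB
  have htr : ∀ v : Fin d → ℝ,
      ((Matrix.of (fun a b => v a * v b) : Matrix (Fin d) (Fin d) ℝ) * B).trace
        = v ⬝ᵥ B.mulVec v := by
    intro v
    simp only [Matrix.trace, Matrix.diag, Matrix.mul_apply, Matrix.of_apply,
      dotProduct, Matrix.mulVec, Finset.mul_sum]
    refine Finset.sum_congr rfl fun a _ => Finset.sum_congr rfl fun b _ => ?_
    rw [hB.apply b a]
    ring
  rw [h1, h2, Matrix.smul_mul, Matrix.smul_mul, Matrix.trace_smul, Matrix.trace_smul,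
    smul_eq_mul, smul_eq_mul, htr, htr]
  ring
end

section
/- Noise-equilibrium characterization for deep linear networks (Theorem E): let Z be a finite dataset of pairs (x_z, y_z) ∈ ℝ^{d_x} × ℝ^{d_y}, let W_1, …, W_D be matrices of compatible dimensions, and for each z set r_z = W_D ⋯ W_1 x_z − y_z and ℓ_z = ‖W_D ⋯ W_1 x_z − y_z‖². Fix 1 ≤ i ≤ D−1 and set ξ_{i+1} = W_D ⋯ W_{i+2} (the identity when i = D−1), h_i = W_{i−1} ⋯ W_1 (the identity when i = 1), C_0^i = E[‖h_i x‖² r r^⊤] and C_1^i = E[‖ξ_{i+1}^⊤ r‖² x x^⊤]. Then for every symmetric matrix B of the appropriate size: E[Tr[(∇_{W_{i+1}} ℓ) B (∇_{W_{i+1}} ℓ)^⊤]] = 4 Tr[W_i h_i C_1^i h_i^⊤ W_i^⊤ B] and E[Tr[(∇_{W_i} ℓ)^⊤ B (∇_{W_i} ℓ)]] = 4 Tr[W_{i+1}^⊤ ξ_{i+1}^⊤ C_0^i ξ_{i+1} W_{i+1} B]; consequently, these two expected traces are equal for every symmetric B if and only if W_{i+1}^⊤ ξ_{i+1}^⊤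 C_0^i ξ_{i+1} W_{i+1} = W_i h_i C_1^i h_i^⊤ W_i^⊤. -/
open Matrix

lemma trace_mul_eq' {p q : Type*} [Fintype p] [Fintype q] (P : Matrix p q ℝ) (Q : Matrix q p ℝ) :
    (P * Q).trace = ∑ j, ∑ k, P j k * Q k j := by
  simp [Matrix.trace, Matrix.diag, Matrix.mul_apply]

lemma fderiv_quad {n m dy : Type*} [Fintype n] [Fintype m] [Fintype dy]
    [DecidableEq n] [DecidableEq m]
    (c : dy → n → m → ℝ) (y : dy → ℝ) (W : n → m → ℝ) (a : n) (b : m) :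
    fderiv ℝ (fun A : n → m → ℝ => ∑ i, (∑ p, ∑ q, c i p q * A p q - y i) ^ 2) W
      (Pi.single a (Pi.single b 1))
      = ∑ i, 2 * (∑ p, ∑ q, c i p q * W p q - y i) * c i a b := by
  have hlin : ∀ i : dy, HasFDerivAt (fun A : n → m → ℝ => ∑ p, ∑ q, c i p q * A p q)
      (∑ p, ∑ q, (c i p q) • ((ContinuousLinearMap.proj q).comp
        (ContinuousLinearMap.proj p : (n → m → ℝ) →L[ℝ] (m → ℝ)))) W := by
    intro i
    have base : ∀ (p : n) (q : m), HasFDerivAt (fun A : n → m → ℝ => A p q)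
        ((ContinuousLinearMap.proj q).comp
          (ContinuousLinearMap.proj p : (n → m → ℝ) →L[ℝ] (m → ℝ))) W :=
      fun p q => by exact ((ContinuousLinearMap.proj q).comp
        (ContinuousLinearMap.proj p : (n → m → ℝ) →L[ℝ] (m → ℝ))).hasFDerivAt
    apply HasFDerivAt.fun_sum; intro p _
    apply HasFDerivAt.fun_sum; intro q _
    exact (base p q).const_mul _
  have hsq : HasFDerivAt (fun A : n → m → ℝ => ∑ i, (∑ p, ∑ q, c i p q * A p q - y i) ^ 2)
      (∑ i, (2 * (∑ p, ∑ q, c i p q * W p q - y i)) • (∑ p, ∑ q, (c i p q) •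
        ((ContinuousLinearMap.proj q).comp
          (ContinuousLinearMap.proj p : (n → m → ℝ) →L[ℝ] (m → ℝ))))) W := by
    apply HasFDerivAt.fun_sum; intro i _
    have h1 := (hlin i).sub_const (y i)
    have h2 := h1.fun_mul h1
    simpa [pow_two, two_mul, add_smul] using h2
  rw [hsq.fderiv]
  simp [ContinuousLinearMap.sum_apply, Pi.single_apply, ite_apply, mul_ite, mul_zero, mul_one,
    Finset.sum_ite_eq', Finset.mul_sum]

lemma mulVec_expand {dy n m dx : Type*} [Fintype n] [Fintype m] [Fintype dx]
    (M : Matrix dy n ℝ) (A : n → m → ℝ) (N : Matrix m dx ℝ) (v : dx → ℝ) (i : dy) :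
    (M * Matrix.of A * N).mulVec v i = ∑ p, ∑ q, (M i p * N.mulVec v q) * A p q := by
  rw [Matrix.mul_assoc, ← Matrix.mulVec_mulVec, ← Matrix.mulVec_mulVec]
  simp only [Matrix.mulVec, dotProduct, Matrix.of_apply, Finset.mul_sum]
  refine Finset.sum_congr rfl fun p _ => Finset.sum_congr rfl fun q _ => ?_
  simp only [Finset.mul_sum, Finset.sum_mul]
  exact Finset.sum_congr rfl fun j _ => by ring

lemma trace_sandwich {p q : Type*} [Fintype p] [Fintype q]
    (k : ℝ) (u : p → ℝ) (v : q → ℝ) (G : Matrix p q ℝ) (hG : ∀ a b, G a b = k * u a * v b)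
    (B : Matrix q q ℝ) :
    (G * B * Gᵀ).trace
      = k ^ 2 * (∑ a, u a ^ 2) * (∑ b, ∑ b', v b * B b b' * v b') := by
  have key : ∀ a : p, ∑ b', (∑ b, G a b * B b b') * Gᵀ b' a
      = k ^ 2 * u a ^ 2 * (∑ b, ∑ b', v b * B b b' * v b') := by
    intro a
    simp only [Matrix.transpose_apply, hG, Finset.sum_mul, Finset.mul_sum]
    rw [Finset.sum_comm]
    exact Finset.sum_congr rfl fun b _ => Finset.sum_congr rfl fun b' _ => by ring
  calc (G * B * Gᵀ).trace = ∑ a, ∑ b', (∑ b, G a b * B b b') * Gᵀ b' a := by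
        rw [trace_mul_eq']
        exact Finset.sum_congr rfl fun a _ =>
          Finset.sum_congr rfl fun b' _ => by rw [Matrix.mul_apply]
    _ = ∑ a, k ^ 2 * u a ^ 2 * (∑ b, ∑ b', v b * B b b' * v b') :=
        Finset.sum_congr rfl fun a _ => key a
    _ = (∑ a, k ^ 2 * u a ^ 2) * (∑ b, ∑ b', v b * B b b' * v b') :=
        (Finset.sum_mul _ _ _).symm
    _ = k ^ 2 * (∑ a, u a ^ 2) * (∑ b, ∑ b', v b * B b b' * v b') := by
        congr 1
        exact (Finset.mul_sum _ _ _).symm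

lemma entry_cov {q n Z : Type*} [Fintype q] [Fintype n] [Fintype Z]
    (M : Matrix q n ℝ) (C : Matrix n n ℝ) (S : Z → ℝ) (x : Z → n → ℝ) (iv : ℝ)
    (hC : ∀ a b, C a b = iv * ∑ z, S z * x z a * x z b) (j k : q) :
    (M * C * Mᵀ) j k = iv * ∑ z, S z * (M.mulVec (x z) j) * (M.mulVec (x z) k) := by
  simp only [Matrix.mul_apply, Matrix.transpose_apply, hC, Matrix.mulVec, dotProduct,
    Finset.mul_sum, Finset.sum_mul]
  conv_lhs => enter [2, a]; rw [Finset.sum_comm]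
  rw [Finset.sum_comm]
  refine Finset.sum_congr rfl fun z _ =>
    Finset.sum_congr rfl fun a _ => Finset.sum_congr rfl fun a' _ => by ring

lemma trace_cov {q n Z : Type*} [Fintype q] [Fintype n] [Fintype Z]
    (M : Matrix q n ℝ) (C : Matrix n n ℝ) (S : Z → ℝ) (x : Z → n → ℝ) (iv : ℝ)
    (hC : ∀ a b, C a b = iv * ∑ z, S z * x z a * x z b) (B : Matrix q q ℝ) :
    (M * C * Mᵀ * B).trace
      = iv * ∑ z, S z * (∑ b, ∑ b', (M.mulVec (x z)) b * B b b' * (M.mulVec (x z)) b') := by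
  calc (M * C * Mᵀ * B).trace = ∑ j, ∑ k, (M * C * Mᵀ) j k * B k j := trace_mul_eq' _ _
    _ = ∑ j, ∑ k, (iv * ∑ z, S z * (M.mulVec (x z) j) * (M.mulVec (x z) k)) * B k j := by
        simp only [entry_cov M C S x iv hC]
    _ = iv * ∑ z, S z * (∑ b, ∑ b', (M.mulVec (x z)) b * B b b' * (M.mulVec (x z)) b') := by
        simp only [Finset.mul_sum, Finset.sum_mul]
        conv_lhs => enter [2, j]; rw [Finset.sum_comm]
        rw [Finset.sum_comm]
        refine Finset.sum_congr rfl fun z _ => ?_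
        rw [Finset.sum_comm]
        refine Finset.sum_congr rfl fun b _ => Finset.sum_congr rfl fun b' _ => by ring

lemma trace_mul_basis {q : Type*} [Fintype q] [DecidableEq q] (P : Matrix q q ℝ) (i j : q) :
    (P * (Matrix.single i j 1 + Matrix.single j i 1)).trace
      = P j i + P i j := by
  have aux : ∀ i' j' : q, (P * Matrix.single i' j' (1 : ℝ)).trace = P j' i' := by
    intro i' j'
    rw [trace_mul_eq']
    simp [Matrix.single, ite_and, mul_ite, mul_one, mul_zero, Finset.sum_ite_eq,
      Finset.sum_ite_eq']
  rw [Matrix.mul_add, Matrix.trace_add, aux, aux]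

lemma basis_symm {q : Type*} [Fintype q] [DecidableEq q] (i j : q) :
    (Matrix.single i j (1 : ℝ) + Matrix.single j i 1).IsSymm := by
  have aux : ∀ i' j' : q, (Matrix.single i' j' (1 : ℝ))ᵀ = Matrix.single j' i' 1 := by
    intro i' j'
    ext a b
    simp [Matrix.transpose_apply, Matrix.single, and_comm]
  rw [Matrix.IsSymm, Matrix.transpose_add, aux, aux, add_comm]

lemma final_combine {Z : Type*} [Fintype Z] (iv : ℝ) (f g : Z → ℝ)
    (hfg : ∀ z, f z = 4 * g z) (T : ℝ) (hT : T = iv * ∑ z, g z) :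
    iv * ∑ z, f z = 4 * T := by
  subst hT
  simp only [hfg]
  rw [show (∑ z, 4 * g z) = 4 * ∑ z, g z from (Finset.mul_sum _ _ _).symm]
  ring
/-- Noise-equilibrium characterization for deep linear networks (Theorem E), stated for the
layer pair `(W_i, W_{i+1})` of the factorization `W_D ⋯ W_1 = ξ_{i+1} W_{i+1} W_i h_i`
(here `xi = ξ_{i+1} = W_D⋯W_{i+2}`, `W1 = W_{i+1}`, `W0 = W_i`, `h = h_i = W_{i-1}⋯W_1`, with
`xi`/`h` the identity in the boundary cases): with `r = ξW_{i+1}W_ihx − y`,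
`C₀ = E[‖hx‖²rrᵀ]`, `C₁ = E[‖ξᵀr‖²xxᵀ]`, for every symmetric `B`,
`E[Tr[(∇_{W_{i+1}}ℓ)B(∇_{W_{i+1}}ℓ)ᵀ]] = 4Tr[W_ih C₁ hᵀW_iᵀB]` and
`E[Tr[(∇_{W_i}ℓ)ᵀB(∇_{W_i}ℓ)]] = 4Tr[W_{i+1}ᵀξᵀC₀ξW_{i+1}B]`; consequently these expected
traces agree for all symmetric `B` iff `W_{i+1}ᵀξᵀC₀ξW_{i+1} = W_ih C₁ hᵀW_iᵀ`. -/
theorem deep_linear_noise_equilibrium {dx dy p q s : ℕ} {Z : Type*} [Fintype Z] [Nonempty Z]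
    (x : Z → Fin dx → ℝ) (y : Z → Fin dy → ℝ)
    (xi : Matrix (Fin dy) (Fin p) ℝ) (W1 : Matrix (Fin p) (Fin q) ℝ)
    (W0 : Matrix (Fin q) (Fin s) ℝ) (h : Matrix (Fin s) (Fin dx) ℝ)
    (r : Z → Fin dy → ℝ)
    (hr : ∀ z, r z = (xi * W1 * W0 * h).mulVec (x z) - y z)
    (ℓ : Z → (Fin p → Fin q → ℝ) → (Fin q → Fin s → ℝ) → ℝ)
    (hℓ : ∀ z A1 A0, ℓ z A1 A0
      = ∑ i, ((xi * Matrix.of A1 * Matrix.of A0 * h).mulVec (x z) i - y z i) ^ 2)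
    (G1 : Z → Matrix (Fin p) (Fin q) ℝ)
    (hG1 : ∀ (z : Z) (a : Fin p) (b : Fin q), G1 z a b
      = fderiv ℝ (fun A1 => ℓ z A1 (fun c e => W0 c e)) (fun a b => W1 a b)
          (Pi.single a (Pi.single b 1)))
    (G0 : Z → Matrix (Fin q) (Fin s) ℝ)
    (hG0 : ∀ (z : Z) (b : Fin q) (c : Fin s), G0 z b c
      = fderiv ℝ (fun A0 => ℓ z (fun a b => W1 a b) A0) (fun c e => W0 c e)
          (Pi.single b (Pi.single c 1)))
    (C0 : Matrix (Fin dy) (Fin dy) ℝ)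
    (hC0 : C0 = Matrix.of fun i i' => (Fintype.card Z : ℝ)⁻¹
        * ∑ z : Z, (∑ a, (h.mulVec (x z) a) ^ 2) * r z i * r z i')
    (C1 : Matrix (Fin dx) (Fin dx) ℝ)
    (hC1 : C1 = Matrix.of fun a b => (Fintype.card Z : ℝ)⁻¹
        * ∑ z : Z, (∑ i, (xiᵀ.mulVec (r z) i) ^ 2) * x z a * x z b) :
    (∀ B : Matrix (Fin q) (Fin q) ℝ, B.IsSymm →
        ((Fintype.card Z : ℝ)⁻¹ * ∑ z : Z, (G1 z * B * (G1 z)ᵀ).trace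
            = 4 * (W0 * h * C1 * hᵀ * W0ᵀ * B).trace)
          ∧ ((Fintype.card Z : ℝ)⁻¹ * ∑ z : Z, ((G0 z)ᵀ * B * G0 z).trace
            = 4 * (W1ᵀ * xiᵀ * C0 * xi * W1 * B).trace))
      ∧ ((∀ B : Matrix (Fin q) (Fin q) ℝ, B.IsSymm →
            (Fintype.card Z : ℝ)⁻¹ * ∑ z : Z, (G1 z * B * (G1 z)ᵀ).trace
              = (Fintype.card Z : ℝ)⁻¹ * ∑ z : Z, ((G0 z)ᵀ * B * G0 z).trace)
          ↔ W1ᵀ * xiᵀ * C0 * xi * W1 = W0 * h * C1 * hᵀ * W0ᵀ) := by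
  set iv : ℝ := (Fintype.card Z : ℝ)⁻¹ with hiv
  -- explicit form of the gradients
  have key1 : ∀ z a b, G1 z a b
      = 2 * (xiᵀ.mulVec (r z) a) * ((W0 * h).mulVec (x z) b) := by
    intro z a b
    rw [hG1]
    have hfun : (fun A1 : Fin p → Fin q → ℝ => ℓ z A1 (fun c e => W0 c e))
        = fun A1 => ∑ i, (∑ p', ∑ q',
            (xi i p' * ((W0 * h).mulVec (x z)) q') * A1 p' q' - y z i) ^ 2 := by
      funext A1
      rw [hℓ z A1 (fun c e => W0 c e)]
      refine Finset.sum_congr rfl fun i _ => ?_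
      have e1 : xi * Matrix.of A1 * Matrix.of (fun c e => W0 c e) * h
          = xi * Matrix.of A1 * (W0 * h) := Matrix.mul_assoc _ _ _
      rw [e1, mulVec_expand]
    rw [hfun, fderiv_quad (fun i p' q' => xi i p' * ((W0 * h).mulVec (x z)) q') (y z)
      (fun a b => W1 a b) a b]
    have hsum : ∀ i, (∑ p', ∑ q',
        (xi i p' * ((W0 * h).mulVec (x z)) q') * W1 p' q') - y z i = r z i := by
      intro i
      rw [hr]
      have e2 := mulVec_expand xi W1 (W0 * h) (x z) i
      have e3 : xi * Matrix.of W1 * (W0 * h) = xi * W1 * W0 * h := (Matrix.mul_assoc _ _ _).symm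
      rw [e3] at e2
      rw [← e2]
      simp
    simp only [hsum]
    have hu : xiᵀ.mulVec (r z) a = ∑ i, xi i a * r z i := by
      simp [Matrix.mulVec, dotProduct, Matrix.transpose_apply]
    rw [hu, Finset.mul_sum, Finset.sum_mul]
    exact Finset.sum_congr rfl fun i _ => by ring
  have key0 : ∀ z b c, G0 z b c
      = 2 * ((W1ᵀ * xiᵀ).mulVec (r z) b) * (h.mulVec (x z) c) := by
    intro z b c
    rw [hG0]
    have hfun : (fun A0 : Fin q → Fin s → ℝ => ℓ z (fun a b => W1 a b) A0)
        = fun A0 => ∑ i, (∑ b', ∑ c',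
            ((xi * W1) i b' * (h.mulVec (x z)) c') * A0 b' c' - y z i) ^ 2 := by
      funext A0
      rw [hℓ z (fun a b => W1 a b) A0]
      refine Finset.sum_congr rfl fun i _ => ?_
      have e1 : xi * Matrix.of (fun a b => W1 a b) * Matrix.of A0 * h
          = (xi * W1) * Matrix.of A0 * h := rfl
      rw [e1, mulVec_expand]
    rw [hfun, fderiv_quad (fun i b' c' => (xi * W1) i b' * (h.mulVec (x z)) c') (y z)
      (fun c e => W0 c e) b c]
    have hsum : ∀ i, (∑ b', ∑ c',
        ((xi * W1) i b' * (h.mulVec (x z)) c') * W0 b' c') - y z i = r z i := by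
      intro i
      rw [hr]
      have e2 := mulVec_expand (xi * W1) W0 h (x z) i
      have e3 : xi * W1 * Matrix.of W0 * h = xi * W1 * W0 * h := rfl
      rw [e3] at e2
      rw [← e2]
      simp
    simp only [hsum]
    have hu : (W1ᵀ * xiᵀ).mulVec (r z) b = ∑ i, (xi * W1) i b * r z i := by
      rw [← Matrix.transpose_mul]
      simp [Matrix.mulVec, dotProduct, Matrix.transpose_apply]
    rw [hu, Finset.mul_sum, Finset.sum_mul]
    exact Finset.sum_congr rfl fun i _ => by ring
  have hC1' : ∀ a b, C1 a b
      = iv * ∑ z, (∑ i, (xiᵀ.mulVec (r z) i) ^ 2) * x z a * x z b := by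
    intro a b; rw [hC1]; rfl
  have hC0' : ∀ a b, C0 a b
      = iv * ∑ z, (∑ c, (h.mulVec (x z) c) ^ 2) * r z a * r z b := by
    intro a b; rw [hC0]; rfl
  have assoc1 : ∀ B : Matrix (Fin q) (Fin q) ℝ,
      W0 * h * C1 * hᵀ * W0ᵀ * B = (W0 * h) * C1 * (W0 * h)ᵀ * B := by
    intro B; simp only [Matrix.transpose_mul, Matrix.mul_assoc]
  have assoc0 : ∀ B : Matrix (Fin q) (Fin q) ℝ,
      W1ᵀ * xiᵀ * C0 * xi * W1 * B = (W1ᵀ * xiᵀ) * C0 * (W1ᵀ * xiᵀ)ᵀ * B := by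
    intro B; simp only [Matrix.transpose_mul, Matrix.transpose_transpose, Matrix.mul_assoc]
  -- part 1
  have part1 : ∀ B : Matrix (Fin q) (Fin q) ℝ, B.IsSymm →
      (iv * ∑ z : Z, (G1 z * B * (G1 z)ᵀ).trace
          = 4 * (W0 * h * C1 * hᵀ * W0ᵀ * B).trace)
        ∧ (iv * ∑ z : Z, ((G0 z)ᵀ * B * G0 z).trace
          = 4 * (W1ᵀ * xiᵀ * C0 * xi * W1 * B).trace) := by
    intro B _
    constructor
    · refine final_combine iv _
        (fun z => (∑ i, (xiᵀ.mulVec (r z) i) ^ 2) *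
          (∑ b, ∑ b', ((W0 * h).mulVec (x z)) b * B b b' * ((W0 * h).mulVec (x z)) b')) ?_ _ ?_
      · intro z
        rw [trace_sandwich 2 (xiᵀ.mulVec (r z)) ((W0 * h).mulVec (x z)) (G1 z) (key1 z) B]
        ring
      · rw [assoc1 B, trace_cov (W0 * h) C1 _ x iv hC1' B]
    · refine final_combine iv _
        (fun z => (∑ c, (h.mulVec (x z) c) ^ 2) *
          (∑ b, ∑ b', ((W1ᵀ * xiᵀ).mulVec (r z)) b * B b b' *
            ((W1ᵀ * xiᵀ).mulVec (r z)) b')) ?_ _ ?_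
      · intro z
        have hGt : ∀ c b, (G0 z)ᵀ c b
            = 2 * (h.mulVec (x z) c) * ((W1ᵀ * xiᵀ).mulVec (r z) b) := by
          intro c b; rw [Matrix.transpose_apply, key0]; ring
        have t := trace_sandwich 2 (h.mulVec (x z)) ((W1ᵀ * xiᵀ).mulVec (r z)) ((G0 z)ᵀ) hGt B
        rw [Matrix.transpose_transpose] at t
        rw [t]; ring
      · rw [assoc0 B, trace_cov (W1ᵀ * xiᵀ) C0 _ r iv hC0' B]
  refine ⟨part1, ?_, ?_⟩
  · -- forward direction
    intro H
    have hMe := entry_cov (W1ᵀ * xiᵀ) C0 _ r iv hC0'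
    have hNe := entry_cov (W0 * h) C1 _ x iv hC1'
    have hMsym : ∀ j k, ((W1ᵀ * xiᵀ) * C0 * (W1ᵀ * xiᵀ)ᵀ) j k
        = ((W1ᵀ * xiᵀ) * C0 * (W1ᵀ * xiᵀ)ᵀ) k j := by
      intro j k; rw [hMe j k, hMe k j]; congr 1
      exact Finset.sum_congr rfl fun z _ => by ring
    have hNsym : ∀ j k, ((W0 * h) * C1 * (W0 * h)ᵀ) j k
        = ((W0 * h) * C1 * (W0 * h)ᵀ) k j := by
      intro j k; rw [hNe j k, hNe k j]; congr 1
      exact Finset.sum_congr rfl fun z _ => by ring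
    have assoc1' : W0 * h * C1 * hᵀ * W0ᵀ = (W0 * h) * C1 * (W0 * h)ᵀ := by
      simp only [Matrix.transpose_mul, Matrix.mul_assoc]
    have assoc0' : W1ᵀ * xiᵀ * C0 * xi * W1 = (W1ᵀ * xiᵀ) * C0 * (W1ᵀ * xiᵀ)ᵀ := by
      simp only [Matrix.transpose_mul, Matrix.transpose_transpose, Matrix.mul_assoc]
    rw [assoc0', assoc1']
    ext i0 j0
    set B : Matrix (Fin q) (Fin q) ℝ :=
      Matrix.single i0 j0 1 + Matrix.single j0 i0 1 with hB
    have hBsymm : B.IsSymm := basis_symm i0 j0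
    have hH := H B hBsymm
    have h1 := (part1 B hBsymm).1
    have h2 := (part1 B hBsymm).2
    rw [h1, h2] at hH
    rw [assoc1 B, assoc0 B] at hH
    have t1 : ((W0 * h) * C1 * (W0 * h)ᵀ * B).trace
        = ((W0 * h) * C1 * (W0 * h)ᵀ) j0 i0 + ((W0 * h) * C1 * (W0 * h)ᵀ) i0 j0 := by
      rw [hB]
      exact trace_mul_basis _ i0 j0
    have t0 : ((W1ᵀ * xiᵀ) * C0 * (W1ᵀ * xiᵀ)ᵀ * B).trace
        = ((W1ᵀ * xiᵀ) * C0 * (W1ᵀ * xiᵀ)ᵀ) j0 i0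
          + ((W1ᵀ * xiᵀ) * C0 * (W1ᵀ * xiᵀ)ᵀ) i0 j0 := by
      rw [hB]
      exact trace_mul_basis _ i0 j0
    rw [t1, t0] at hH
    have hM' := hMsym j0 i0
    have hN' := hNsym j0 i0
    linarith
  · -- reverse direction
    intro Heq B hB
    rw [(part1 B hB).1, (part1 B hB).2, Heq]
end
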